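/- arXiv:1302.0214 — 4 statements merged into one kernel-verified Lean document; each statement's English description precedes it below -/
import Mathlib

section
/- The Demazure operators satisfy the braid relation π_i ∘ π_{i+1} ∘ π_i = π_{i+1} ∘ π_i ∘ π_{i+1}. -/
open MvPolynomial

/-- the Demazure operators π_i(f) = ∂_i(x_i f) satisfy the braid relation
π_i ∘ π_{i+1} ∘ π_i = π_{i+1} ∘ π_i ∘ π_{i+1}.  Here j = i+1, k = i+2,
`Di` is ∂_i and `Dj` is ∂_{i+1}, so π_i(f) = Di (X i * f), π_{i+1}(f) = Dj (X j * f). -/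
theorem demazure_braid (n : ℕ) (i j k : Fin n)
    (hij : (i : ℕ) + 1 = (j : ℕ)) (hjk : (j : ℕ) + 1 = (k : ℕ))
    (Di Dj : MvPolynomial (Fin n) ℤ → MvPolynomial (Fin n) ℤ)
    (hDi : ∀ g, (X i - X j) * Di g = g - rename (Equiv.swap i j) g)
    (hDj : ∀ g, (X j - X k) * Dj g = g - rename (Equiv.swap j k) g)
    (f : MvPolynomial (Fin n) ℤ) :
    Di (X i * Dj (X j * Di (X i * f))) = Dj (X j * Di (X i * Dj (X j * f))) := by
  have hij' : i ≠ j := by intro h; subst h; omega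
  have hjk' : j ≠ k := by intro h; subst h; omega
  have hik' : i ≠ k := by intro h; subst h; omega
  have hs_i : Equiv.swap i j i = j := Equiv.swap_apply_left i j
  have hs_j : Equiv.swap i j j = i := Equiv.swap_apply_right i j
  have hs_k : Equiv.swap i j k = k :=
    Equiv.swap_apply_of_ne_of_ne (Ne.symm hik') (Ne.symm hjk')
  have ht_i : Equiv.swap j k i = i :=
    Equiv.swap_apply_of_ne_of_ne hij' hik'
  have ht_j : Equiv.swap j k j = k := Equiv.swap_apply_left j k
  have ht_k : Equiv.swap j k k = j := Equiv.swap_apply_right j k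
  have ha : (X i - X j : MvPolynomial (Fin n) ℤ) ≠ 0 :=
    sub_ne_zero.mpr (fun h => hij' (X_injective h))
  have hb : (X j - X k : MvPolynomial (Fin n) ℤ) ≠ 0 :=
    sub_ne_zero.mpr (fun h => hjk' (X_injective h))
  have hc : (X i - X k : MvPolynomial (Fin n) ℤ) ≠ 0 :=
    sub_ne_zero.mpr (fun h => hik' (X_injective h))
  have hss : ∀ p : MvPolynomial (Fin n) ℤ,
      rename (Equiv.swap i j) (rename (Equiv.swap i j) p) = p := by
    intro p
    rw [rename_rename]
    have h : (⇑(Equiv.swap i j)) ∘ ⇑(Equiv.swap i j) = id :=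
      funext fun x => Equiv.swap_apply_self i j x
    rw [h, rename_id, AlgHom.id_apply]
  have htt : ∀ p : MvPolynomial (Fin n) ℤ,
      rename (Equiv.swap j k) (rename (Equiv.swap j k) p) = p := by
    intro p
    rw [rename_rename]
    have h : (⇑(Equiv.swap j k)) ∘ ⇑(Equiv.swap j k) = id :=
      funext fun x => Equiv.swap_apply_self j k x
    rw [h, rename_id, AlgHom.id_apply]
  have hbraid :
      rename (Equiv.swap i j) (rename (Equiv.swap j k) (rename (Equiv.swap i j) f))
      = rename (Equiv.swap j k) (rename (Equiv.swap i j) (rename (Equiv.swap j k) f)) := by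
    rw [rename_rename, rename_rename, rename_rename, rename_rename]
    have hfun : (⇑(Equiv.swap i j) ∘ ⇑(Equiv.swap j k)) ∘ ⇑(Equiv.swap i j)
        = (⇑(Equiv.swap j k) ∘ ⇑(Equiv.swap i j)) ∘ ⇑(Equiv.swap j k) := by
      funext x
      simp only [Function.comp_apply]
      by_cases hxi : x = i
      · subst hxi; simp only [hs_i, hs_j, hs_k, ht_i, ht_j, ht_k]
      · by_cases hxj : x = j
        · subst hxj; simp only [hs_i, hs_j, hs_k, ht_i, ht_j, ht_k]
        · by_cases hxk : x = k
          · subst hxk; simp only [hs_i, hs_j, hs_k, ht_i, ht_j, ht_k]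
          · have h1 : Equiv.swap i j x = x := Equiv.swap_apply_of_ne_of_ne hxi hxj
            have h2 : Equiv.swap j k x = x := Equiv.swap_apply_of_ne_of_ne hxj hxk
            simp only [h1, h2]
    rw [hfun]
  -- abbreviations
  set sf := rename (Equiv.swap i j) f with hsfv
  set tf := rename (Equiv.swap j k) f with htfv
  set stf := rename (Equiv.swap i j) tf with hstfv
  set tsf := rename (Equiv.swap j k) sf with htsfv
  set stsf := rename (Equiv.swap i j) tsf with hstsfv
  set tstf := rename (Equiv.swap j k) stf with htstfv
  have hsts : stsf = tstf := by rw [hstsfv, htsfv, hsfv, htstfv, hstfv, htfv]; exact hbraid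
  set A1 := Di (X i * f) with hA1v
  set A2 := Dj (X j * A1) with hA2v
  set A3 := Di (X i * A2) with hA3v
  set B1 := Dj (X j * f) with hB1v
  set B2 := Di (X i * B1) with hB2v
  set B3 := Dj (X j * B2) with hB3v
  set sA1 := rename (Equiv.swap i j) A1 with hsA1v
  set tA1 := rename (Equiv.swap j k) A1 with htA1v
  set stA1 := rename (Equiv.swap i j) tA1 with hstA1v
  set sA2 := rename (Equiv.swap i j) A2 with hsA2v
  set tB1 := rename (Equiv.swap j k) B1 with htB1v
  set sB1 := rename (Equiv.swap i j) B1 with hsB1v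
  set tsB1 := rename (Equiv.swap j k) sB1 with htsB1v
  set tB2 := rename (Equiv.swap j k) B2 with htB2v
  -- base equations
  have e1 : (X i - X j) * A1 = X i * f - X j * sf := by
    have h := hDi (X i * f)
    simp only [map_mul, rename_X, hs_i] at h
    rw [← hA1v, ← hsfv] at h
    exact h
  have f1 : (X j - X k) * B1 = X j * f - X k * tf := by
    have h := hDj (X j * f)
    simp only [map_mul, rename_X, ht_j] at h
    rw [← hB1v, ← htfv] at h
    exact h
  -- renamed copies
  have hsA1 : sA1 = A1 := by
    have h := congrArg (rename (Equiv.swap i j)) (hDi (X i * f))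
    simp only [map_mul, map_sub, rename_X, hs_i, hs_j, hss] at h
    rw [← hA1v, ← hsA1v, ← hsfv] at h
    have h2 : (X i - X j) * sA1 = (X i - X j) * A1 := by linear_combination -h - e1
    exact mul_left_cancel₀ ha h2
  have htB1 : tB1 = B1 := by
    have h := congrArg (rename (Equiv.swap j k)) (hDj (X j * f))
    simp only [map_mul, map_sub, rename_X, ht_j, ht_k, htt] at h
    rw [← hB1v, ← htB1v, ← htfv] at h
    have h2 : (X j - X k) * tB1 = (X j - X k) * B1 := by linear_combination -h - f1
    exact mul_left_cancel₀ hb h2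
  have e2 : (X i - X k) * tA1 = X i * tf - X k * tsf := by
    have h := congrArg (rename (Equiv.swap j k)) (hDi (X i * f))
    simp only [map_mul, map_sub, rename_X, hs_i, ht_i, ht_j] at h
    rw [← hA1v, ← htA1v, ← hsfv, ← htfv, ← htsfv] at h
    exact h
  have e3 : (X j - X k) * stA1 = X j * stf - X k * stsf := by
    have h := congrArg (rename (Equiv.swap i j))
      (congrArg (rename (Equiv.swap j k)) (hDi (X i * f)))
    simp only [map_mul, map_sub, rename_X, hs_i, hs_j, hs_k, ht_i, ht_j, ht_k] at h
    rw [← hA1v, ← htA1v, ← hstA1v, ← hsfv, ← htfv, ← hstfv, ← htsfv, ← hstsfv] at h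
    exact h
  have f2 : (X i - X k) * sB1 = X i * sf - X k * stf := by
    have h := congrArg (rename (Equiv.swap i j)) (hDj (X j * f))
    simp only [map_mul, map_sub, rename_X, ht_j, hs_j, hs_k] at h
    rw [← hB1v, ← hsB1v, ← hsfv, ← htfv, ← hstfv] at h
    exact h
  have f3 : (X i - X j) * tsB1 = X i * tsf - X j * tstf := by
    have h := congrArg (rename (Equiv.swap j k))
      (congrArg (rename (Equiv.swap i j)) (hDj (X j * f)))
    simp only [map_mul, map_sub, rename_X, hs_i, hs_j, hs_k, ht_i, ht_j, ht_k] at h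
    rw [← hB1v, ← hsB1v, ← htsB1v, ← hsfv, ← htfv, ← hstfv, ← htsfv, ← htstfv] at h
    exact h
  have e4 : (X j - X k) * A2 = X j * A1 - X k * tA1 := by
    have h := hDj (X j * A1)
    simp only [map_mul, rename_X, ht_j] at h
    rw [← hA2v, ← htA1v] at h
    exact h
  have e5 : (X i - X k) * sA2 = X i * A1 - X k * stA1 := by
    have h := congrArg (rename (Equiv.swap i j)) (hDj (X j * A1))
    simp only [map_mul, map_sub, rename_X, ht_j, hs_j, hs_k] at h
    rw [← hA2v, ← hsA2v, ← hsA1v, ← htA1v, ← hstA1v, hsA1] at h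
    exact h
  have e6 : (X i - X j) * A3 = X i * A2 - X j * sA2 := by
    have h := hDi (X i * A2)
    simp only [map_mul, rename_X, hs_i] at h
    rw [← hA3v, ← hsA2v] at h
    exact h
  have f4 : (X i - X j) * B2 = X i * B1 - X j * sB1 := by
    have h := hDi (X i * B1)
    simp only [map_mul, rename_X, hs_i] at h
    rw [← hB2v, ← hsB1v] at h
    exact h
  have f5 : (X i - X k) * tB2 = X i * B1 - X k * tsB1 := by
    have h := congrArg (rename (Equiv.swap j k)) (hDi (X i * B1))
    simp only [map_mul, map_sub, rename_X, hs_i, ht_i, ht_j] at h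
    rw [← hB2v, ← htB2v, ← htB1v, ← hsB1v, ← htsB1v, htB1] at h
    exact h
  have f6 : (X j - X k) * B3 = X j * B2 - X k * tB2 := by
    have h := hDj (X j * B2)
    simp only [map_mul, rename_X, ht_j] at h
    rw [← hB3v, ← htB2v] at h
    exact h
  -- assemble
  have h2 : (X i - X j) * (X j - X k) * (X i - X k) * A2
      = (X i - X k) * X j * (X i * f - X j * sf)
        - (X i - X j) * X k * (X i * tf - X k * tsf) := by
    linear_combination (X i - X j) * (X i - X k) * e4 + (X i - X k) * X j * e1
      - (X i - X j) * X k * e2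
  have h3 : (X i - X j) * (X j - X k) * (X i - X k) * sA2
      = (X j - X k) * X i * (X i * f - X j * sf)
        - (X i - X j) * X k * (X j * stf - X k * stsf) := by
    linear_combination (X i - X j) * (X j - X k) * e5 + (X j - X k) * X i * e1
      - (X i - X j) * X k * e3
  have h4 : (X i - X j) * (X i - X j) * (X j - X k) * (X i - X k) * A3
      = X i * ((X i - X k) * X j * (X i * f - X j * sf)
          - (X i - X j) * X k * (X i * tf - X k * tsf))
        - X j * ((X j - X k) * X i * (X i * f - X j * sf)
          - (X i - X j) * X k * (X j * stf - X k * stsf)) := by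
    linear_combination (X i - X j) * (X j - X k) * (X i - X k) * e6 + X i * h2 - X j * h3
  have g2 : (X i - X j) * (X j - X k) * (X i - X k) * B2
      = (X i - X k) * X i * (X j * f - X k * tf)
        - (X j - X k) * X j * (X i * sf - X k * stf) := by
    linear_combination (X j - X k) * (X i - X k) * f4 + (X i - X k) * X i * f1
      - (X j - X k) * X j * f2
  have g3 : (X i - X j) * (X j - X k) * (X i - X k) * tB2
      = (X i - X j) * X i * (X j * f - X k * tf)
        - (X j - X k) * X k * (X i * tsf - X j * tstf) := by
    linear_combination (X i - X j) * (X j - X k) * f5 + (X i - X j) * X i * f1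
      - (X j - X k) * X k * f3
  have g4 : (X i - X j) * (X j - X k) * (X j - X k) * (X i - X k) * B3
      = X j * ((X i - X k) * X i * (X j * f - X k * tf)
          - (X j - X k) * X j * (X i * sf - X k * stf))
        - X k * ((X i - X j) * X i * (X j * f - X k * tf)
          - (X j - X k) * X k * (X i * tsf - X j * tstf)) := by
    linear_combination (X i - X j) * (X j - X k) * (X i - X k) * f6 + X j * g2 - X k * g3
  have H : ((X i - X j) * (X i - X j) * (X j - X k) * (X j - X k) * (X i - X k)) * A3
      = ((X i - X j) * (X i - X j) * (X j - X k) * (X j - X k) * (X i - X k)) * B3 := by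
    linear_combination (X j - X k) * h4 - (X i - X j) * g4
      - (X i - X j) * (X j - X k) * X j * X k * X k * hsts
  have hP : ((X i - X j) * (X i - X j) * (X j - X k) * (X j - X k) * (X i - X k)
      : MvPolynomial (Fin n) ℤ) ≠ 0 :=
    mul_ne_zero (mul_ne_zero (mul_ne_zero (mul_ne_zero ha ha) hb) hb) hc
  exact mul_left_cancel₀ hP H
end

section
/- If α = (α_1, ..., α_t, 0, 0, ...) with α_1 ≤ α_2 ≤ ... ≤ α_t, then the key polynomial κ_α equals the Schur polynomial s_{(α_t, ..., α_2, α_1)}(x_1, ..., x_t). -/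
open MvPolynomial Classical

/-- The divided difference operator ∂ on ℤ[x_1,...,x_n] for the pair of variables
x_i, x_j (intended: j = i+1): ∂(f) = (f - s_{ij}·f)/(x_i - x_j), defined via choice
from the (always valid) divisibility of f - s_{ij}·f by x_i - x_j. -/
noncomputable def ddiff (n : ℕ) (i j : Fin n) (f : MvPolynomial (Fin n) ℤ) :
    MvPolynomial (Fin n) ℤ :=
  if h : (X i - X j : MvPolynomial (Fin n) ℤ) ∣ (f - rename (Equiv.swap i j) f) then
    h.choose
  else 0

/-- The Demazure operator π_i(f) = ∂_i(x_i · f). -/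
noncomputable def demazure (n : ℕ) (i j : Fin n) (f : MvPolynomial (Fin n) ℤ) :
    MvPolynomial (Fin n) ℤ :=
  ddiff n i j (X i * f)

/-- `IsKey n α f` holds iff f is the key polynomial κ_α:
κ_α = x^α for weakly decreasing α, and κ_α = π_i(κ_{α̂}) when α_i < α_{i+1}, where α̂
exchanges the entries i, i+1 of α. -/
inductive IsKey (n : ℕ) : (Fin n → ℕ) → MvPolynomial (Fin n) ℤ → Prop where
  | decreasing (α : Fin n → ℕ) (h : ∀ i j : Fin n, i ≤ j → α j ≤ α i) :
      IsKey n α (∏ i, X i ^ α i)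
  | step (α : Fin n → ℕ) (i j : Fin n) (hij : (i : ℕ) + 1 = (j : ℕ)) (h : α i < α j)
      (f : MvPolynomial (Fin n) ℤ) (hf : IsKey n (α ∘ Equiv.swap i j) f) :
      IsKey n α (demazure n i j f)

namespace KeyAux

variable {n : ℕ}

lemma X_sub_X_ne_zero {i j : Fin n} (h : i ≠ j) :
    (X i - X j : MvPolynomial (Fin n) ℤ) ≠ 0 := by
  intro hc
  exact h (MvPolynomial.X_injective (sub_eq_zero.mp hc))

lemma rename_swap_swap (i j : Fin n) (f : MvPolynomial (Fin n) ℤ) :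
    rename (Equiv.swap i j) (rename (Equiv.swap i j) f) = f := by
  rw [rename_rename]
  rw [show (⇑(Equiv.swap i j) ∘ ⇑(Equiv.swap i j)) = id from ?_, rename_id_apply]
  funext x; simp

lemma dvd_pow_pair (i j : Fin n) (p q : ℕ) :
    (X i - X j : MvPolynomial (Fin n) ℤ) ∣ X i ^ p * X j ^ q - X i ^ q * X j ^ p := by
  rcases le_total p q with h | h
  · obtain ⟨r, rfl⟩ : ∃ r, q = p + r := ⟨q - p, by omega⟩
    have h2 : (X i - X j : MvPolynomial (Fin n) ℤ) ∣ X i ^ r - X j ^ r :=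
      sub_dvd_pow_sub_pow _ _ _
    have he : X i ^ p * X j ^ (p + r) - X i ^ (p + r) * X j ^ p
        = (X i ^ p * X j ^ p) * -((X i:MvPolynomial (Fin n) ℤ) ^ r - X j ^ r) := by
      rw [pow_add, pow_add]; ring
    rw [he]
    exact Dvd.dvd.mul_left (dvd_neg.mpr h2) _
  · obtain ⟨r, rfl⟩ : ∃ r, p = q + r := ⟨p - q, by omega⟩
    have h2 : (X i - X j : MvPolynomial (Fin n) ℤ) ∣ X i ^ r - X j ^ r :=
      sub_dvd_pow_sub_pow _ _ _
    have he : X i ^ (q + r) * X j ^ q - X i ^ q * X j ^ (q + r)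
        = (X i ^ q * X j ^ q) * ((X i:MvPolynomial (Fin n) ℤ) ^ r - X j ^ r) := by
      rw [pow_add, pow_add]; ring
    rw [he]
    exact Dvd.dvd.mul_left h2 _

lemma rename_swap_prod (i j : Fin n) (e : Fin n → ℕ) :
    rename (Equiv.swap i j) (∏ k, (X k : MvPolynomial (Fin n) ℤ) ^ e k)
      = ∏ k, (X k : MvPolynomial (Fin n) ℤ) ^ e (Equiv.swap i j k) := by
  rw [map_prod]
  rw [← Equiv.prod_comp (Equiv.swap i j)
    (fun k => (X k : MvPolynomial (Fin n) ℤ) ^ e (Equiv.swap i j k))]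
  apply Finset.prod_congr rfl
  intro k _
  rw [map_pow, rename_X]
  congr 2
  simp

lemma dvd_sub_rename_swap (i j : Fin n) (f : MvPolynomial (Fin n) ℤ) :
    (X i - X j : MvPolynomial (Fin n) ℤ) ∣ f - rename (Equiv.swap i j) f := by
  rcases eq_or_ne i j with rfl | hij
  · simp [Equiv.swap_self]
  induction f using MvPolynomial.induction_on' with
  | add p q hp hq =>
    have : p + q - rename (Equiv.swap i j) (p + q)
        = (p - rename (Equiv.swap i j) p) + (q - rename (Equiv.swap i j) q) := by
      rw [map_add]; ring
    rw [this]; exact dvd_add hp hq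
  | monomial d a =>
    have hm : (monomial d a : MvPolynomial (Fin n) ℤ) = C a * ∏ k, X k ^ d k := by
      rw [monomial_eq, Finsupp.prod_fintype]
      intro k; exact pow_zero _
    rw [hm, map_mul, rename_C, rename_swap_prod, ← mul_sub]
    apply Dvd.dvd.mul_left
    have hji : j ∈ (Finset.univ.erase i) := by simp [hij.symm]
    have split : ∀ e : Fin n → ℕ, (∏ k, (X k:MvPolynomial (Fin n) ℤ) ^ e k)
        = X i ^ e i * X j ^ e j * ∏ k ∈ (Finset.univ.erase i).erase j, X k ^ e k := by
      intro e
      rw [← Finset.mul_prod_erase Finset.univ _ (Finset.mem_univ i),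
        ← Finset.mul_prod_erase _ _ hji, ← mul_assoc]
    rw [split, split]
    have heq : ∀ k ∈ (Finset.univ.erase i).erase j,
        (X k:MvPolynomial (Fin n) ℤ) ^ d (Equiv.swap i j k) = X k ^ d k := by
      intro k hk
      simp only [Finset.mem_erase] at hk
      rw [Equiv.swap_apply_of_ne_of_ne hk.2.1 hk.1]
    rw [Finset.prod_congr rfl heq, ← sub_mul]
    apply Dvd.dvd.mul_right
    rw [Equiv.swap_apply_left, Equiv.swap_apply_right]
    exact dvd_pow_pair i j (d i) (d j)

lemma ddiff_spec (i j : Fin n) (f : MvPolynomial (Fin n) ℤ) :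
    (X i - X j : MvPolynomial (Fin n) ℤ) * ddiff n i j f
      = f - rename (Equiv.swap i j) f := by
  rw [ddiff, dif_pos (dvd_sub_rename_swap i j f)]
  exact ((dvd_sub_rename_swap i j f).choose_spec).symm

lemma ddiff_unique {i j : Fin n} (hij : i ≠ j) {f g : MvPolynomial (Fin n) ℤ}
    (h : (X i - X j : MvPolynomial (Fin n) ℤ) * g = f - rename (Equiv.swap i j) f) :
    ddiff n i j f = g := by
  have := ddiff_spec i j f
  exact mul_left_cancel₀ (X_sub_X_ne_zero hij) (by rw [this, h])

lemma demazure_spec (i j : Fin n) (f : MvPolynomial (Fin n) ℤ) :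
    (X i - X j : MvPolynomial (Fin n) ℤ) * demazure n i j f
      = X i * f - X j * rename (Equiv.swap i j) f := by
  rw [demazure, ddiff_spec, map_mul, rename_X, Equiv.swap_apply_left]

/-- demazure output is swap-symmetric. -/
lemma rename_swap_demazure {i j : Fin n} (hij : i ≠ j) (f : MvPolynomial (Fin n) ℤ) :
    rename (Equiv.swap i j) (demazure n i j f) = demazure n i j f := by
  have h := demazure_spec i j f
  have h2 := congrArg (rename (Equiv.swap i j)) h
  simp only [map_sub, map_mul, rename_X, Equiv.swap_apply_left, Equiv.swap_apply_right,
    rename_swap_swap] at h2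
  have h3 : (X i - X j : MvPolynomial (Fin n) ℤ) * rename (Equiv.swap i j) (demazure n i j f)
      = (X i - X j) * demazure n i j f := by
    linear_combination -h - h2
  exact mul_left_cancel₀ (X_sub_X_ne_zero hij) h3

/-- π on swap-symmetric f is identity. -/
lemma demazure_of_symm {i j : Fin n} (hij : i ≠ j) {f : MvPolynomial (Fin n) ℤ}
    (h : rename (Equiv.swap i j) f = f) : demazure n i j f = f := by
  have : (X i - X j : MvPolynomial (Fin n) ℤ) * f
      = X i * f - rename (Equiv.swap i j) (X i * f) := by
    rw [map_mul, rename_X, Equiv.swap_apply_left, h]; ring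
  exact ddiff_unique hij this

end KeyAux

namespace KeyAux

variable {n : ℕ}

/-- rename by a permutation fixing i and j commutes with demazure i j. -/
lemma rename_comm_demazure {i j : Fin n} (hij : i ≠ j) (τ : Equiv.Perm (Fin n))
    (hi : τ i = i) (hj : τ j = j) (f : MvPolynomial (Fin n) ℤ) :
    rename τ (demazure n i j f) = demazure n i j (rename τ f) := by
  have hcomm : ⇑τ ∘ ⇑(Equiv.swap i j) = ⇑(Equiv.swap i j) ∘ ⇑τ := by
    funext x
    simp only [Function.comp_apply]
    rcases eq_or_ne x i with rfl | hxi
    · rw [Equiv.swap_apply_left, hi, Equiv.swap_apply_left, hj]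
    rcases eq_or_ne x j with rfl | hxj
    · rw [Equiv.swap_apply_right, hj, Equiv.swap_apply_right, hi]
    · rw [Equiv.swap_apply_of_ne_of_ne hxi hxj,
        Equiv.swap_apply_of_ne_of_ne (fun hc => hxi (by rw [← hi] at hc; exact τ.injective hc))
          (fun hc => hxj (by rw [← hj] at hc; exact τ.injective hc))]
  have h := congrArg (rename τ) (demazure_spec i j f)
  simp only [map_sub, map_mul, rename_X, hi, hj] at h
  rw [rename_rename, hcomm, ← rename_rename] at h
  symm
  apply ddiff_unique hij
  rw [map_mul, rename_X, Equiv.swap_apply_left]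
  linear_combination h

/-- Commutation of demazure operators on disjoint pairs of variables. -/
lemma demazure_comm {i j k l : Fin n} (hij : i ≠ j) (hkl : k ≠ l)
    (hik : i ≠ k) (hil : i ≠ l) (hjk : j ≠ k) (hjl : j ≠ l)
    (f : MvPolynomial (Fin n) ℤ) :
    demazure n i j (demazure n k l f) = demazure n k l (demazure n i j f) := by
  have hdisj : (Equiv.swap i j).Disjoint (Equiv.swap k l) := by
    intro x
    rcases eq_or_ne x i with rfl | h1
    · right; exact Equiv.swap_apply_of_ne_of_ne hik hil
    rcases eq_or_ne x j with rfl | h2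
    · right; exact Equiv.swap_apply_of_ne_of_ne hjk hjl
    · left; exact Equiv.swap_apply_of_ne_of_ne h1 h2
  have hcomm : Equiv.swap i j * Equiv.swap k l = Equiv.swap k l * Equiv.swap i j :=
    hdisj.commute
  have hswap : ⇑(Equiv.swap i j) ∘ ⇑(Equiv.swap k l) = ⇑(Equiv.swap k l) ∘ ⇑(Equiv.swap i j) := by
    funext x
    have := congrArg (fun σ : Equiv.Perm (Fin n) => σ x) hcomm
    simpa [Equiv.Perm.mul_apply] using this
  set d1 := demazure n k l f with hd1def
  set d1' := demazure n i j f with hd1'def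
  have E2 : (X k - X l : MvPolynomial (Fin n) ℤ) * d1
      = X k * f - X l * rename (Equiv.swap k l) f := demazure_spec k l f
  have E1 : (X i - X j : MvPolynomial (Fin n) ℤ) * demazure n i j d1
      = X i * d1 - X j * rename (Equiv.swap i j) d1 := demazure_spec i j d1
  have E5 : (X i - X j : MvPolynomial (Fin n) ℤ) * d1'
      = X i * f - X j * rename (Equiv.swap i j) f := demazure_spec i j f
  have E4 : (X k - X l : MvPolynomial (Fin n) ℤ) * demazure n k l d1'
      = X k * d1' - X l * rename (Equiv.swap k l) d1' := demazure_spec k l d1'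
  have E3 := congrArg (rename (Equiv.swap i j)) E2
  simp only [map_sub, map_mul, rename_X,
    Equiv.swap_apply_of_ne_of_ne hik.symm hjk.symm,
    Equiv.swap_apply_of_ne_of_ne hil.symm hjl.symm] at E3
  have E6 := congrArg (rename (Equiv.swap k l)) E5
  simp only [map_sub, map_mul, rename_X,
    Equiv.swap_apply_of_ne_of_ne hik hil,
    Equiv.swap_apply_of_ne_of_ne hjk hjl] at E6
  rw [rename_rename, ← hswap, ← rename_rename] at E6
  have key : ((X i - X j) * (X k - X l) : MvPolynomial (Fin n) ℤ) * demazure n i j d1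
      = ((X i - X j) * (X k - X l)) * demazure n k l d1' := by
    linear_combination (X k - X l) * E1 + X i * E2 - X j * E3
      - (X i - X j) * E4 - X k * E5 + X l * E6
  exact mul_left_cancel₀
    (mul_ne_zero (X_sub_X_ne_zero hij) (X_sub_X_ne_zero hkl)) key

/-- Braid relation for demazure operators. -/
lemma demazure_braid {i j k : Fin n} (hij : i ≠ j) (hik : i ≠ k) (hjk : j ≠ k)
    (f : MvPolynomial (Fin n) ℤ) :
    demazure n i j (demazure n j k (demazure n i j f))
      = demazure n j k (demazure n i j (demazure n j k f)) := by
  have htriple : ∀ x : Fin n,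
      Equiv.swap i j (Equiv.swap j k (Equiv.swap i j x))
        = Equiv.swap j k (Equiv.swap i j (Equiv.swap j k x)) := by
    have L : Equiv.swap i j * Equiv.swap j k * Equiv.swap i j = Equiv.swap i k := by
      rw [Equiv.swap_comm i j, Equiv.swap_comm j k]
      exact Equiv.swap_mul_swap_mul_swap (Ne.symm hjk) (Ne.symm hik)
    have R : Equiv.swap j k * Equiv.swap i j * Equiv.swap j k = Equiv.swap k i :=
      Equiv.swap_mul_swap_mul_swap hij hik
    have h1 : Equiv.swap i j * Equiv.swap j k * Equiv.swap i j
        = Equiv.swap j k * Equiv.swap i j * Equiv.swap j k := by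
      rw [L, R, Equiv.swap_comm]
    intro x
    have := congrArg (fun σ : Equiv.Perm (Fin n) => σ x) h1
    simpa [Equiv.Perm.mul_apply] using this
  -- left side
  set d1 := demazure n i j f with hd1def
  set d2 := demazure n j k d1 with hd2def
  have hd1 : (X i - X j : MvPolynomial (Fin n) ℤ) * d1
      = X i * f - X j * rename (Equiv.swap i j) f := demazure_spec i j f
  have hs1d1 : rename (Equiv.swap i j) d1 = d1 := rename_swap_demazure hij f
  have hd2 : (X j - X k : MvPolynomial (Fin n) ℤ) * d2
      = X j * d1 - X k * rename (Equiv.swap j k) d1 := demazure_spec j k d1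
  have hd3 : (X i - X j : MvPolynomial (Fin n) ℤ) * demazure n i j d2
      = X i * d2 - X j * rename (Equiv.swap i j) d2 := demazure_spec i j d2
  have A1 := congrArg (rename (Equiv.swap i j)) hd2
  simp only [map_sub, map_mul, rename_X, Equiv.swap_apply_right,
    Equiv.swap_apply_of_ne_of_ne hik.symm hjk.symm, hs1d1] at A1
  have A2 := congrArg (rename (Equiv.swap j k)) hd1
  simp only [map_sub, map_mul, rename_X, Equiv.swap_apply_left,
    Equiv.swap_apply_of_ne_of_ne hij hik] at A2
  have A3 := congrArg (rename (Equiv.swap i j)) A2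
  simp only [map_sub, map_mul, rename_X, Equiv.swap_apply_left,
    Equiv.swap_apply_of_ne_of_ne hik.symm hjk.symm] at A3
  have HL : ((X i - X j) * (X i - X k) * (X j - X k) : MvPolynomial (Fin n) ℤ)
      * demazure n i j d2
      = X i^2 * X j * f - X i * X j^2 * rename (Equiv.swap i j) f
        - X i^2 * X k * rename (Equiv.swap j k) f
        + X i * X k^2 * rename (Equiv.swap j k) (rename (Equiv.swap i j) f)
        + X j^2 * X k * rename (Equiv.swap i j) (rename (Equiv.swap j k) f)
        - X j * X k^2 * rename (Equiv.swap i j) (rename (Equiv.swap j k)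
            (rename (Equiv.swap i j) f)) := by
    linear_combination ((X i - X k) * (X j - X k)) * hd3 + (X i * (X i - X k)) * hd2
      - (X j * (X j - X k)) * A1 + (X i * X j) * hd1 - (X i * X k) * A2 + (X j * X k) * A3
  -- right side
  set u1 := demazure n j k f with hu1def
  set u2 := demazure n i j u1 with hu2def
  have e1 : (X j - X k : MvPolynomial (Fin n) ℤ) * u1
      = X j * f - X k * rename (Equiv.swap j k) f := demazure_spec j k f
  have hs2u1 : rename (Equiv.swap j k) u1 = u1 := rename_swap_demazure hjk f
  have e2 : (X i - X j : MvPolynomial (Fin n) ℤ) * u2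
      = X i * u1 - X j * rename (Equiv.swap i j) u1 := demazure_spec i j u1
  have e3 : (X j - X k : MvPolynomial (Fin n) ℤ) * demazure n j k u2
      = X j * u2 - X k * rename (Equiv.swap j k) u2 := demazure_spec j k u2
  have B1 := congrArg (rename (Equiv.swap j k)) e2
  simp only [map_sub, map_mul, rename_X, Equiv.swap_apply_left,
    Equiv.swap_apply_of_ne_of_ne hij hik, hs2u1] at B1
  have B2 := congrArg (rename (Equiv.swap i j)) e1
  simp only [map_sub, map_mul, rename_X, Equiv.swap_apply_right,
    Equiv.swap_apply_of_ne_of_ne hik.symm hjk.symm] at B2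
  have B3 := congrArg (rename (Equiv.swap j k)) B2
  simp only [map_sub, map_mul, rename_X, Equiv.swap_apply_right,
    Equiv.swap_apply_of_ne_of_ne hij hik] at B3
  have HR : ((X i - X j) * (X i - X k) * (X j - X k) : MvPolynomial (Fin n) ℤ)
      * demazure n j k u2
      = X i^2 * X j * f - X i * X j^2 * rename (Equiv.swap i j) f
        - X i^2 * X k * rename (Equiv.swap j k) f
        + X i * X k^2 * rename (Equiv.swap j k) (rename (Equiv.swap i j) f)
        + X j^2 * X k * rename (Equiv.swap i j) (rename (Equiv.swap j k) f)
        - X j * X k^2 * rename (Equiv.swap j k) (rename (Equiv.swap i j)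
            (rename (Equiv.swap j k) f)) := by
    linear_combination ((X i - X j) * (X i - X k)) * e3 + (X j * (X i - X k)) * e2
      - (X k * (X i - X j)) * B1 + (X i^2) * e1 - (X j^2) * B2 + (X k^2) * B3
  have htr : rename (Equiv.swap i j) (rename (Equiv.swap j k)
        (rename (Equiv.swap i j) f))
      = rename (Equiv.swap j k) (rename (Equiv.swap i j)
        (rename (Equiv.swap j k) f)) := by
    rw [rename_rename, rename_rename, rename_rename, rename_rename]
    have hfun : ((⇑(Equiv.swap i j) ∘ ⇑(Equiv.swap j k)) ∘ ⇑(Equiv.swap i j))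
        = ((⇑(Equiv.swap j k) ∘ ⇑(Equiv.swap i j)) ∘ ⇑(Equiv.swap j k)) := by
      funext x; exact htriple x
    rw [hfun]
  rw [htr] at HL
  have hV : ((X i - X j) * (X i - X k) * (X j - X k) : MvPolynomial (Fin n) ℤ) ≠ 0 :=
    mul_ne_zero (mul_ne_zero (X_sub_X_ne_zero hij) (X_sub_X_ne_zero hik))
      (X_sub_X_ne_zero hjk)
  exact mul_left_cancel₀ hV (HL.trans HR.symm)

end KeyAux

namespace KeyAux

variable {n : ℕ}

/-- The set of (strict) ascent pairs of a composition. -/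
noncomputable def asc (β : Fin n → ℕ) : Finset (Fin n × Fin n) :=
  Finset.univ.filter (fun p => p.1 < p.2 ∧ β p.1 < β p.2)

noncomputable def Nasc (β : Fin n → ℕ) : ℕ := (asc β).card

lemma swap_lt {i j : Fin n} (hij : (i:ℕ)+1 = (j:ℕ)) {a b : Fin n} (hab : a < b)
    (hne : ¬(a = i ∧ b = j)) : Equiv.swap i j a < Equiv.swap i j b := by
  have hij' : i ≠ j := fun h => by rw [h] at hij; omega
  have hab' : (a:ℕ) < (b:ℕ) := hab
  rcases eq_or_ne a i with rfl | hai
  · rcases eq_or_ne b j with rfl | hbj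
    · exact absurd ⟨rfl, rfl⟩ hne
    · have hba : b ≠ a := ne_of_gt hab
      rw [Equiv.swap_apply_left, Equiv.swap_apply_of_ne_of_ne hba.symm.symm hbj]
      · exact Fin.lt_def.mpr (by
          have : (b:ℕ) ≠ (j:ℕ) := fun h => hbj (Fin.ext h)
          omega)
  rcases eq_or_ne a j with rfl | haj
  · have hbi : b ≠ i := fun h => by
      have : (b:ℕ) = (i:ℕ) := congrArg Fin.val h
      omega
    have hbj : b ≠ a := ne_of_gt hab
    rw [Equiv.swap_apply_right, Equiv.swap_apply_of_ne_of_ne hbi hbj]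
    exact Fin.lt_def.mpr (by omega)
  rcases eq_or_ne b i with rfl | hbi
  · rw [Equiv.swap_apply_of_ne_of_ne hai haj, Equiv.swap_apply_left]
    exact Fin.lt_def.mpr (by
      have h1 : (a:ℕ) ≠ (b:ℕ) := fun h => hai (Fin.ext (h.trans rfl))
      omega)
  rcases eq_or_ne b j with rfl | hbj
  · rw [Equiv.swap_apply_of_ne_of_ne hai haj, Equiv.swap_apply_right]
    exact Fin.lt_def.mpr (by
      have h1 : (a:ℕ) ≠ (i:ℕ) := fun h => hai (Fin.ext h)
      have h2 : (a:ℕ) ≠ (b:ℕ) := fun h => haj (Fin.ext h)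
      omega)
  · rw [Equiv.swap_apply_of_ne_of_ne hai haj, Equiv.swap_apply_of_ne_of_ne hbi hbj]
    exact hab

lemma Nasc_swap_lt {β : Fin n → ℕ} {i j : Fin n} (hij : (i:ℕ)+1 = (j:ℕ))
    (h : β i < β j) : Nasc (β ∘ Equiv.swap i j) < Nasc β := by
  have hij' : i ≠ j := fun h => by rw [h] at hij; omega
  have hmem : (i, j) ∈ asc β := by
    simp only [asc, Finset.mem_filter, Finset.mem_univ, true_and]
    exact ⟨Fin.lt_def.mpr (by omega), h⟩
  apply lt_of_le_of_lt ?_ (Finset.card_erase_lt_of_mem hmem)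
  apply Finset.card_le_card_of_injOn
    (fun p => (Equiv.swap i j p.1, Equiv.swap i j p.2))
  · intro p hp
    simp only [Finset.mem_coe, asc, Finset.mem_filter, Finset.mem_univ, true_and, Function.comp_apply] at hp
    rcases hp with ⟨hlt, hval⟩
    have hne : ¬(p.1 = i ∧ p.2 = j) := by
      rintro ⟨h1, h2⟩
      rw [h1, h2, Equiv.swap_apply_left, Equiv.swap_apply_right] at hval
      omega
    rw [Finset.mem_coe, Finset.mem_erase]
    constructor
    · intro hc
      have h1 : Equiv.swap i j p.1 = i := congrArg Prod.fst hc
      have h2 : Equiv.swap i j p.2 = j := congrArg Prod.snd hc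
      have h1' : p.1 = j := by
        have := congrArg (Equiv.swap i j) h1
        rwa [Equiv.swap_apply_self, Equiv.swap_apply_left] at this
      have h2' : p.2 = i := by
        have := congrArg (Equiv.swap i j) h2
        rwa [Equiv.swap_apply_self, Equiv.swap_apply_right] at this
      rw [h1', h2'] at hlt
      exact absurd hlt (by
        intro hc2
        have : (j:ℕ) < (i:ℕ) := hc2
        omega)
    · simp only [asc, Finset.mem_filter, Finset.mem_univ, true_and]
      exact ⟨swap_lt hij hlt hne, hval⟩
  · intro p _ q _ hpq
    have h1 : Equiv.swap i j p.1 = Equiv.swap i j q.1 := congrArg Prod.fst hpq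
    have h2 : Equiv.swap i j p.2 = Equiv.swap i j q.2 := congrArg Prod.snd hpq
    exact Prod.ext ((Equiv.swap i j).injective h1) ((Equiv.swap i j).injective h2)

lemma adjacent_decreasing {β : Fin n → ℕ}
    (h : ∀ i j : Fin n, (i:ℕ)+1 = (j:ℕ) → β j ≤ β i) :
    ∀ i j : Fin n, i ≤ j → β j ≤ β i := by
  have key : ∀ d : ℕ, ∀ i j : Fin n, (j:ℕ) = (i:ℕ) + d → β j ≤ β i := by
    intro d
    induction d with
    | zero => intro i j hd; rw [Fin.ext (by omega : (j:ℕ) = (i:ℕ))]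
    | succ d ih =>
      intro i j hd
      have hmid : (i:ℕ) + d < n := by have := j.isLt; omega
      set mid : Fin n := ⟨(i:ℕ) + d, hmid⟩ with hmiddef
      calc β j ≤ β mid := h mid j (by simp [hmiddef]; omega)
      _ ≤ β i := ih i mid (by simp [hmiddef])
  intro i j hle
  exact key ((j:ℕ) - (i:ℕ)) i j (by
    have : (i:ℕ) ≤ (j:ℕ) := hle
    omega)

lemma isKey_exists_aux : ∀ (m : ℕ) (β : Fin n → ℕ), Nasc β ≤ m → ∃ g, IsKey n β g := by
  intro m
  induction m with
  | zero =>
    intro β hN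
    refine ⟨_, IsKey.decreasing β (adjacent_decreasing ?_)⟩
    intro i j hij
    by_contra hc
    push_neg at hc
    have hmem : (i, j) ∈ asc β := by
      simp only [asc, Finset.mem_filter, Finset.mem_univ, true_and]
      exact ⟨Fin.lt_def.mpr (by omega), hc⟩
    have : 0 < Nasc β := Finset.card_pos.mpr ⟨_, hmem⟩
    omega
  | succ m ih =>
    intro β hN
    by_cases hasc : ∃ i j : Fin n, (i:ℕ)+1 = (j:ℕ) ∧ β i < β j
    · obtain ⟨i, j, hij, h⟩ := hasc
      obtain ⟨w, hw⟩ := ih (β ∘ Equiv.swap i j) (by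
        have := Nasc_swap_lt hij h
        omega)
      exact ⟨_, IsKey.step β i j hij h w hw⟩
    · push_neg at hasc
      exact ⟨_, IsKey.decreasing β (adjacent_decreasing (fun i j hij => hasc i j hij))⟩

lemma isKey_exists (β : Fin n → ℕ) : ∃ g, IsKey n β g :=
  isKey_exists_aux (Nasc β) β le_rfl

end KeyAux

namespace KeyAux

variable {n : ℕ}

lemma swap_disjoint_commute {i j k l : Fin n} (hik : i ≠ k) (hil : i ≠ l)
    (hjk : j ≠ k) (hjl : j ≠ l) :
    Equiv.swap i j * Equiv.swap k l = Equiv.swap k l * Equiv.swap i j := by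
  apply Equiv.Perm.Disjoint.commute
  intro x
  rcases eq_or_ne x i with rfl | h1
  · right; exact Equiv.swap_apply_of_ne_of_ne hik hil
  rcases eq_or_ne x j with rfl | h2
  · right; exact Equiv.swap_apply_of_ne_of_ne hjk hjl
  · left; exact Equiv.swap_apply_of_ne_of_ne h1 h2

lemma swap_triple_perm {i j k : Fin n} (hij : i ≠ j) (hik : i ≠ k) (hjk : j ≠ k) :
    Equiv.swap i j * Equiv.swap j k * Equiv.swap i j
      = Equiv.swap j k * Equiv.swap i j * Equiv.swap j k := by
  have L : Equiv.swap i j * Equiv.swap j k * Equiv.swap i j = Equiv.swap i k := by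
    rw [Equiv.swap_comm i j, Equiv.swap_comm j k]
    exact Equiv.swap_mul_swap_mul_swap (Ne.symm hjk) (Ne.symm hik)
  have R : Equiv.swap j k * Equiv.swap i j * Equiv.swap j k = Equiv.swap k i :=
    Equiv.swap_mul_swap_mul_swap hij hik
  rw [L, R, Equiv.swap_comm]

lemma isKey_unique_aux : ∀ (m : ℕ) (β : Fin n → ℕ), Nasc β ≤ m →
    ∀ g g', IsKey n β g → IsKey n β g' → g = g' := by
  intro m
  induction m with
  | zero =>
    intro β hN g g' hg hg'
    have hnoasc : ∀ i j : Fin n, (i:ℕ)+1 = (j:ℕ) → ¬ β i < β j := by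
      intro i j hij hc
      have hmem : (i, j) ∈ asc β := by
        simp only [asc, Finset.mem_filter, Finset.mem_univ, true_and]
        exact ⟨Fin.lt_def.mpr (by omega), hc⟩
      have : 0 < Nasc β := Finset.card_pos.mpr ⟨_, hmem⟩
      omega
    cases hg with
    | decreasing _ _ =>
      cases hg' with
      | decreasing _ _ => rfl
      | step _ i j hij h f hf => exact absurd h (hnoasc i j hij)
    | step _ i j hij h f hf => exact absurd h (hnoasc i j hij)
  | succ m IH =>
    intro β hN g g' hg hg'
    cases hg with
    | decreasing _ hdec =>
      cases hg' with
      | decreasing _ _ => rfl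
      | step _ i j hij h f hf =>
        exact absurd h (not_lt.mpr (hdec i j (Fin.le_def.mpr (by omega))))
    | step _ i j hij h f1 hf1 =>
      cases hg' with
      | decreasing _ hdec =>
        exact absurd h (not_lt.mpr (hdec i j (Fin.le_def.mpr (by omega))))
      | step _ i' j' hij' h' f2 hf2 =>
        have main : ∀ (a b a' b' : Fin n), (a:ℕ)+1 = (b:ℕ) → (a':ℕ)+1 = (b':ℕ) →
            (a:ℕ) < (a':ℕ) → ∀ u1 u2, β a < β b → β a' < β b' →
            IsKey n (β ∘ Equiv.swap a b) u1 → IsKey n (β ∘ Equiv.swap a' b') u2 →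
            demazure n a b u1 = demazure n a' b' u2 := by
          intro a b a' b' hab ha'b' hord u1 u2 hv hv' hu1 hu2
          have hN1 : Nasc (β ∘ Equiv.swap a b) ≤ m := by
            have := Nasc_swap_lt hab hv; omega
          have hN2 : Nasc (β ∘ Equiv.swap a' b') ≤ m := by
            have := Nasc_swap_lt ha'b' hv'; omega
          have hab0 : a ≠ b := Fin.ne_of_val_ne (by omega)
          have ha'b'0 : a' ≠ b' := Fin.ne_of_val_ne (by omega)
          have haa' : a ≠ a' := Fin.ne_of_val_ne (by omega)
          have hab' : a ≠ b' := Fin.ne_of_val_ne (by omega)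
          have hba' : b ≠ b' := Fin.ne_of_val_ne (by omega)
          by_cases hadj : (b:ℕ) = (a':ℕ)
          · -- adjacent: b = a'; after subst the triple is (a, a', b')
            have hba : a' = b := Fin.ext hadj.symm
            subst hba
            -- vars a < a' < b'; hab : a+1 = a'; ha'b' : a'+1 = b'
            have hvt : β a < β b' := lt_trans hv hv'
            obtain ⟨w, hw⟩ := isKey_exists
              (((β ∘ Equiv.swap a a') ∘ Equiv.swap a' b') ∘ Equiv.swap a a')
            -- left tower
            have hk1 : IsKey n ((β ∘ Equiv.swap a a') ∘ Equiv.swap a' b')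
                (demazure n a a' w) := by
              apply IsKey.step _ a a' hab _ w hw
              · show β (Equiv.swap a a' (Equiv.swap a' b' a)) < β (Equiv.swap a a' (Equiv.swap a' b' a'))
                rw [Equiv.swap_apply_of_ne_of_ne haa' hab', Equiv.swap_apply_left,
                  Equiv.swap_apply_left, Equiv.swap_apply_of_ne_of_ne (Ne.symm hab') (Ne.symm hba')]
                exact hv'
            have hk2 : IsKey n (β ∘ Equiv.swap a a')
                (demazure n a' b' (demazure n a a' w)) := by
              apply IsKey.step _ a' b' ha'b' _ _ hk1
              · show β (Equiv.swap a a' a') < β (Equiv.swap a a' b')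
                rw [Equiv.swap_apply_right, Equiv.swap_apply_of_ne_of_ne (Ne.symm hab') (Ne.symm hba')]
                exact hvt
            have e1 : u1 = demazure n a' b' (demazure n a a' w) :=
              IH (β ∘ Equiv.swap a a') hN1 _ _ hu1 hk2
            -- right tower
            have hE : ((β ∘ Equiv.swap a a') ∘ Equiv.swap a' b') ∘ Equiv.swap a a'
                = ((β ∘ Equiv.swap a' b') ∘ Equiv.swap a a') ∘ Equiv.swap a' b' := by
              funext x
              simp only [Function.comp_apply]
              refine congrArg β ?_
              have := congrArg (fun σ : Equiv.Perm (Fin n) => σ x)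
                (swap_triple_perm haa' hab' hba')
              simpa [Equiv.Perm.mul_apply] using this
            have hw' : IsKey n (((β ∘ Equiv.swap a' b') ∘ Equiv.swap a a') ∘ Equiv.swap a' b') w := by
              rwa [hE] at hw
            have hk1' : IsKey n ((β ∘ Equiv.swap a' b') ∘ Equiv.swap a a')
                (demazure n a' b' w) := by
              apply IsKey.step _ a' b' ha'b' _ w hw'
              · show β (Equiv.swap a' b' (Equiv.swap a a' a')) < β (Equiv.swap a' b' (Equiv.swap a a' b'))
                rw [Equiv.swap_apply_right, Equiv.swap_apply_of_ne_of_ne haa'.symm.symm hab',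
                  Equiv.swap_apply_of_ne_of_ne (Ne.symm hab') (Ne.symm hba'), Equiv.swap_apply_right]
                exact hv
            have hk2' : IsKey n (β ∘ Equiv.swap a' b')
                (demazure n a a' (demazure n a' b' w)) := by
              apply IsKey.step _ a a' hab _ _ hk1'
              · show β (Equiv.swap a' b' a) < β (Equiv.swap a' b' a')
                rw [Equiv.swap_apply_of_ne_of_ne haa' hab', Equiv.swap_apply_left]
                exact hvt
            have e2 : u2 = demazure n a a' (demazure n a' b' w) :=
              IH (β ∘ Equiv.swap a' b') hN2 _ _ hu2 hk2'
            rw [e1, e2]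
            exact demazure_braid haa' hab' hba' w
          · -- disjoint: b < a'
            have hba'2 : b ≠ a' := Fin.ne_of_val_ne (by omega)
            obtain ⟨w, hw⟩ := isKey_exists ((β ∘ Equiv.swap a b) ∘ Equiv.swap a' b')
            have hk1 : IsKey n (β ∘ Equiv.swap a b) (demazure n a' b' w) := by
              apply IsKey.step _ a' b' ha'b' _ w hw
              · show β (Equiv.swap a b a') < β (Equiv.swap a b b')
                rw [Equiv.swap_apply_of_ne_of_ne (Ne.symm haa') (Ne.symm hba'2),
                  Equiv.swap_apply_of_ne_of_ne (Ne.symm hab') (Ne.symm hba')]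
                exact hv'
            have e1 : u1 = demazure n a' b' w :=
              IH (β ∘ Equiv.swap a b) hN1 _ _ hu1 hk1
            have hE : (β ∘ Equiv.swap a b) ∘ Equiv.swap a' b'
                = (β ∘ Equiv.swap a' b') ∘ Equiv.swap a b := by
              funext x
              simp only [Function.comp_apply]
              refine congrArg β ?_
              have := congrArg (fun σ : Equiv.Perm (Fin n) => σ x)
                (swap_disjoint_commute haa' hab' hba'2 hba')
              simpa [Equiv.Perm.mul_apply] using this
            have hw' : IsKey n ((β ∘ Equiv.swap a' b') ∘ Equiv.swap a b) w := by
              rwa [hE] at hw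
            have hk2 : IsKey n (β ∘ Equiv.swap a' b') (demazure n a b w) := by
              apply IsKey.step _ a b hab _ w hw'
              · show β (Equiv.swap a' b' a) < β (Equiv.swap a' b' b)
                rw [Equiv.swap_apply_of_ne_of_ne haa' hab',
                  Equiv.swap_apply_of_ne_of_ne hba'2 hba']
                exact hv
            have e2 : u2 = demazure n a b w :=
              IH (β ∘ Equiv.swap a' b') hN2 _ _ hu2 hk2
            rw [e1, e2]
            exact demazure_comm hab0 ha'b'0 haa' hab' hba'2 hba' w
        rcases lt_trichotomy (i:ℕ) (i':ℕ) with hc | hc | hc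
        · exact main i j i' j' hij hij' hc f1 f2 h h' hf1 hf2
        · have hii : i = i' := Fin.ext hc
          subst hii
          have hjj : j = j' := Fin.ext (by omega)
          subst hjj
          rw [IH (β ∘ Equiv.swap i j) (by have := Nasc_swap_lt hij h; omega) f1 f2 hf1 hf2]
        · exact (main i' j' i j hij' hij hc f2 f1 h' h hf2 hf1).symm

lemma isKey_unique {β : Fin n → ℕ} {g g' : MvPolynomial (Fin n) ℤ}
    (hg : IsKey n β g) (hg' : IsKey n β g') : g = g' :=
  isKey_unique_aux (Nasc β) β le_rfl g g' hg hg'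

end KeyAux

namespace KeyAux

variable {n : ℕ}

lemma rename_swap_prod_symm {β : Fin n → ℕ} {k l : Fin n} (h : β k = β l) :
    rename (Equiv.swap k l) (∏ i, (X i : MvPolynomial (Fin n) ℤ) ^ β i)
      = ∏ i, (X i : MvPolynomial (Fin n) ℤ) ^ β i := by
  rw [rename_swap_prod]
  apply Finset.prod_congr rfl
  intro x _
  congr 1
  rcases eq_or_ne x k with rfl | hk
  · rw [Equiv.swap_apply_left]; exact h.symm
  rcases eq_or_ne x l with rfl | hl
  · rw [Equiv.swap_apply_right]; exact h
  · rw [Equiv.swap_apply_of_ne_of_ne hk hl]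

lemma isKey_symm_aux : ∀ (m : ℕ) (β : Fin n → ℕ), Nasc β ≤ m →
    ∀ f, IsKey n β f → ∀ k l : Fin n, (k:ℕ)+1 = (l:ℕ) → β k = β l →
    rename (Equiv.swap k l) f = f := by
  intro m
  induction m with
  | zero =>
    intro β hN f hf k l hkl heq
    cases hf with
    | decreasing _ _ => exact rename_swap_prod_symm heq
    | step _ i j hij h f1 hf1 =>
      have hmem : (i, j) ∈ asc β := by
        simp only [asc, Finset.mem_filter, Finset.mem_univ, true_and]
        exact ⟨Fin.lt_def.mpr (by omega), h⟩
      have : 0 < Nasc β := Finset.card_pos.mpr ⟨_, hmem⟩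
      omega
  | succ m IH =>
    intro β hN f hf k l hkl heq
    cases hf with
    | decreasing _ _ => exact rename_swap_prod_symm heq
    | step _ i j hij h f1 hf1 =>
      have hkl0 : k ≠ l := Fin.ne_of_val_ne (by omega)
      have hij0 : i ≠ j := Fin.ne_of_val_ne (by omega)
      have hNs : Nasc (β ∘ Equiv.swap i j) ≤ m := by
        have := Nasc_swap_lt hij h; omega
      have hik : (i:ℕ) ≠ (k:ℕ) := by
        intro hc
        have hkk : k = i := Fin.ext hc.symm
        have hll : l = j := Fin.ext (by omega)
        rw [hkk, hll] at heq
        omega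
      rcases eq_or_ne (i:ℕ) ((k:ℕ)+1) with hc1 | h1
      · -- i = l : pattern k < l = i < j, values (c, c, B)
        have hil : i = l := Fin.ext (by omega)
        subst hil
        -- positions k < i < j ; heq : β k = β i ; h : β i < β j
        have hkj0 : k ≠ j := Fin.ne_of_val_ne (by omega)
        obtain ⟨w, hw⟩ := isKey_exists ((β ∘ Equiv.swap i j) ∘ Equiv.swap k i)
        have hk1 : IsKey n (β ∘ Equiv.swap i j) (demazure n k i w) := by
          apply IsKey.step _ k i hkl _ w hw
          · show β (Equiv.swap i j k) < β (Equiv.swap i j i)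
            rw [Equiv.swap_apply_of_ne_of_ne hkl0 hkj0, Equiv.swap_apply_left]
            omega
        have e1 : f1 = demazure n k i w := isKey_unique hf1 hk1
        have hNss : Nasc ((β ∘ Equiv.swap i j) ∘ Equiv.swap k i) ≤ m := by
          have := Nasc_swap_lt (β := β ∘ Equiv.swap i j) hkl (by
            show β (Equiv.swap i j k) < β (Equiv.swap i j i)
            rw [Equiv.swap_apply_of_ne_of_ne hkl0 hkj0, Equiv.swap_apply_left]
            omega)
          omega
        have hsymw : rename (Equiv.swap i j) w = w := by
          apply IH _ hNss w hw i j hij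
          show β (Equiv.swap i j (Equiv.swap k i i)) = β (Equiv.swap i j (Equiv.swap k i j))
          rw [Equiv.swap_apply_right, Equiv.swap_apply_of_ne_of_ne hkl0 hkj0,
            Equiv.swap_apply_of_ne_of_ne hkj0.symm hij0.symm, Equiv.swap_apply_right]
          exact heq
        have hsym1 : demazure n i j w = w := demazure_of_symm hij0 hsymw
        have hb := demazure_braid hkl0 hkj0 hij0 w
        rw [hsym1] at hb
        rw [e1, ← hb]
        exact rename_swap_demazure hkl0 _
      rcases eq_or_ne (k:ℕ) ((i:ℕ)+1) with hc2 | h2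
      · -- k = j : pattern i < j = k < l, values (B', c, c) with B' < c
        have hkj : k = j := Fin.ext (by omega)
        subst hkj
        -- positions i < k < l ; h : β i < β k ; heq : β k = β l
        have hil0 : i ≠ l := Fin.ne_of_val_ne (by omega)
        obtain ⟨w, hw⟩ := isKey_exists ((β ∘ Equiv.swap i k) ∘ Equiv.swap k l)
        have hk1 : IsKey n (β ∘ Equiv.swap i k) (demazure n k l w) := by
          apply IsKey.step _ k l hkl _ w hw
          · show β (Equiv.swap i k k) < β (Equiv.swap i k l)
            rw [Equiv.swap_apply_right, Equiv.swap_apply_of_ne_of_ne hil0.symm hkl0.symm]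
            omega
        have e1 : f1 = demazure n k l w := isKey_unique hf1 hk1
        have hNss : Nasc ((β ∘ Equiv.swap i k) ∘ Equiv.swap k l) ≤ m := by
          have := Nasc_swap_lt (β := β ∘ Equiv.swap i k) hkl (by
            show β (Equiv.swap i k k) < β (Equiv.swap i k l)
            rw [Equiv.swap_apply_right, Equiv.swap_apply_of_ne_of_ne hil0.symm hkl0.symm]
            omega)
          omega
        have hsymw : rename (Equiv.swap i k) w = w := by
          apply IH _ hNss w hw i k hij
          show β (Equiv.swap i k (Equiv.swap k l i)) = β (Equiv.swap i k (Equiv.swap k l k))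
          rw [Equiv.swap_apply_of_ne_of_ne hij0 hil0, Equiv.swap_apply_left,
            Equiv.swap_apply_left, Equiv.swap_apply_of_ne_of_ne hil0.symm hkl0.symm]
          exact heq
        have hsym1 : demazure n i k w = w := demazure_of_symm hij0 hsymw
        have hb := demazure_braid hij0 hil0 hkl0 w
        rw [hsym1] at hb
        rw [e1, hb]
        exact rename_swap_demazure hkl0 _
      · -- fully disjoint
        have hik0 : i ≠ k := Fin.ne_of_val_ne hik
        have hil0 : i ≠ l := Fin.ne_of_val_ne (by omega)
        have hjk0 : j ≠ k := Fin.ne_of_val_ne (by omega)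
        have hjl0 : j ≠ l := Fin.ne_of_val_ne (by omega)
        rw [show Equiv.swap k l = Equiv.swap k l from rfl,
          rename_comm_demazure hij0 (Equiv.swap k l)
            (Equiv.swap_apply_of_ne_of_ne hik0 hil0)
            (Equiv.swap_apply_of_ne_of_ne hjk0 hjl0) f1]
        rw [IH (β ∘ Equiv.swap i j) hNs f1 hf1 k l hkl (by
          show β (Equiv.swap i j k) = β (Equiv.swap i j l)
          rw [Equiv.swap_apply_of_ne_of_ne hik0.symm hjk0.symm,
            Equiv.swap_apply_of_ne_of_ne hil0.symm hjl0.symm]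
          exact heq)]

end KeyAux

namespace KeyAux

variable (n t : ℕ) (ht : t ≤ n)

def tEquiv : Fin t ≃ {x : Fin n // (x:ℕ) < t} where
  toFun a := ⟨Fin.castLE ht a, a.isLt⟩
  invFun x := ⟨(x : { x : Fin n // (x:ℕ) < t }).1.1, x.2⟩
  left_inv a := rfl
  right_inv x := rfl

noncomputable def EP (σ : Equiv.Perm (Fin t)) : Equiv.Perm (Fin n) :=
  σ.extendDomain (tEquiv n t ht)

lemma EP_cast (σ : Equiv.Perm (Fin t)) (a : Fin t) :
    EP n t ht σ (Fin.castLE ht a) = Fin.castLE ht (σ a) :=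
  Equiv.Perm.extendDomain_apply_image σ (tEquiv n t ht) a

lemma EP_not (σ : Equiv.Perm (Fin t)) (x : Fin n) (hx : ¬ (x:ℕ) < t) :
    EP n t ht σ x = x :=
  Equiv.Perm.extendDomain_apply_not_subtype σ (tEquiv n t ht) hx

lemma EP_mul (σ τ : Equiv.Perm (Fin t)) :
    EP n t ht σ * EP n t ht τ = EP n t ht (σ * τ) :=
  Equiv.Perm.extendDomain_mul (tEquiv n t ht) σ τ

lemma EP_swap (a b : Fin t) :
    EP n t ht (Equiv.swap a b) = Equiv.swap (Fin.castLE ht a) (Fin.castLE ht b) := by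
  ext x
  by_cases hx : (x:ℕ) < t
  · have hxx : x = Fin.castLE ht ⟨(x:ℕ), hx⟩ := rfl
    rw [hxx, EP_cast]
    rcases eq_or_ne (⟨(x:ℕ), hx⟩ : Fin t) a with he | ha
    · rw [he, Equiv.swap_apply_left, Equiv.swap_apply_left]
    rcases eq_or_ne (⟨(x:ℕ), hx⟩ : Fin t) b with he | hb
    · rw [he, Equiv.swap_apply_right, Equiv.swap_apply_right]
    · rw [Equiv.swap_apply_of_ne_of_ne ha hb,
        Equiv.swap_apply_of_ne_of_ne
          (fun hc => ha (Fin.castLE_injective ht hc))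
          (fun hc => hb (Fin.castLE_injective ht hc))]
  · rw [EP_not n t ht (Equiv.swap a b) x hx,
      Equiv.swap_apply_of_ne_of_ne
        (fun hc => hx (by rw [hc]; exact a.isLt))
        (fun hc => hx (by rw [hc]; exact b.isLt))]

noncomputable def Asym (g : MvPolynomial (Fin n) ℤ) : MvPolynomial (Fin n) ℤ :=
  ∑ σ : Equiv.Perm (Fin t), ((Equiv.Perm.sign σ : ℤˣ) : ℤ) • rename (EP n t ht σ) g

lemma Asym_sub (g h : MvPolynomial (Fin n) ℤ) :
    Asym n t ht (g - h) = Asym n t ht g - Asym n t ht h := by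
  unfold Asym
  rw [← Finset.sum_sub_distrib]
  apply Finset.sum_congr rfl
  intro σ _
  rw [map_sub, smul_sub]

lemma Asym_rename (τ : Equiv.Perm (Fin t)) (g : MvPolynomial (Fin n) ℤ) :
    Asym n t ht (rename (EP n t ht τ) g)
      = ((Equiv.Perm.sign τ : ℤˣ) : ℤ) • Asym n t ht g := by
  unfold Asym
  rw [Finset.smul_sum]
  have step1 : ∀ σ : Equiv.Perm (Fin t),
      ((Equiv.Perm.sign σ : ℤˣ) : ℤ) • rename (EP n t ht σ) (rename (EP n t ht τ) g)
        = ((Equiv.Perm.sign σ : ℤˣ) : ℤ) • rename (EP n t ht (σ * τ)) g := by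
    intro σ
    rw [rename_rename, ← EP_mul, Equiv.Perm.coe_mul]
  simp_rw [step1]
  rw [← Equiv.sum_comp (Equiv.mulRight τ)
    (fun ρ => ((Equiv.Perm.sign τ : ℤˣ) : ℤ) •
      (((Equiv.Perm.sign ρ : ℤˣ) : ℤ) • rename (EP n t ht ρ) g))]
  apply Finset.sum_congr rfl
  intro σ _
  have hσ : Equiv.mulRight τ σ = σ * τ := rfl
  rw [hσ, smul_smul]
  congr 1
  rcases Int.units_eq_one_or (Equiv.Perm.sign τ) with h | h <;>
    rw [Equiv.Perm.sign_mul, h] <;> push_cast <;> ring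
lemma Asym_swap_zero {a b : Fin t} (hab : a ≠ b) {u : MvPolynomial (Fin n) ℤ}
    (hu : rename (Equiv.swap (Fin.castLE ht a) (Fin.castLE ht b)) u = u) :
    Asym n t ht u = 0 := by
  have h1 : Asym n t ht u = ((Equiv.Perm.sign (Equiv.swap a b) : ℤˣ) : ℤ) • Asym n t ht u := by
    conv_lhs => rw [← hu, ← EP_swap, Asym_rename]
  rw [Equiv.Perm.sign_swap hab] at h1
  have h2 : (2 : MvPolynomial (Fin n) ℤ) * Asym n t ht u = 0 := by
    have h3 : ((((-1 : ℤˣ) : ℤ)) : ℤ) • Asym n t ht u = - Asym n t ht u := by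
      norm_num
    rw [h3] at h1
    rw [two_mul]
    nth_rewrite 1 [h1]
    ring
  rcases mul_eq_zero.mp h2 with h | h
  · exact absurd h two_ne_zero
  · exact h

end KeyAux

namespace KeyAux

variable (n t : ℕ) (ht : t ≤ n)

noncomputable def xdelta : MvPolynomial (Fin n) ℤ :=
  ∏ j : Fin t, X (Fin.castLE ht j) ^ (t - 1 - (j:ℕ))

lemma rename_EP_prod (σ : Equiv.Perm (Fin t)) (e : Fin t → ℕ) :
    rename (EP n t ht σ) (∏ j : Fin t, (X (Fin.castLE ht j) : MvPolynomial (Fin n) ℤ) ^ e j)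
      = ∏ j : Fin t, (X (Fin.castLE ht (σ j)) : MvPolynomial (Fin n) ℤ) ^ e j := by
  rw [map_prod]
  apply Finset.prod_congr rfl
  intro k _
  rw [map_pow, rename_X, EP_cast]

lemma Asym_xdelta_demazure (i' j' : Fin t) (hij : (i':ℕ)+1 = (j':ℕ))
    (g : MvPolynomial (Fin n) ℤ) :
    Asym n t ht (xdelta n t ht * demazure n (Fin.castLE ht i') (Fin.castLE ht j') g)
      = Asym n t ht (xdelta n t ht * g) := by
  have hne' : i' ≠ j' := Fin.ne_of_val_ne (by omega)
  set ci := Fin.castLE ht i' with hci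
  set cj := Fin.castLE ht j' with hcj
  have hne : ci ≠ cj := fun hc => hne' (Fin.castLE_injective ht hc)
  set d := demazure n ci cj g with hddef
  have hd : (X ci - X cj : MvPolynomial (Fin n) ℤ) * d
      = X ci * g - X cj * rename (Equiv.swap ci cj) g := demazure_spec ci cj g
  have hsd : rename (Equiv.swap ci cj) d = d := rename_swap_demazure hne g
  have hj'mem : j' ∈ Finset.univ.erase i' := by simp [hne'.symm]
  set m : MvPolynomial (Fin n) ℤ :=
    ∏ k ∈ (Finset.univ.erase i').erase j', X (Fin.castLE ht k) ^ (t - 1 - (k:ℕ)) with hmdef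
  have hexp : t - 1 - (i':ℕ) = (t - 1 - (j':ℕ)) + 1 := by
    have := j'.isLt; omega
  set a := t - 1 - (j':ℕ) with hadef
  have hsplit : xdelta n t ht = X ci ^ (a+1) * (X cj ^ a * m) := by
    rw [xdelta, ← Finset.mul_prod_erase Finset.univ _ (Finset.mem_univ i'),
      ← Finset.mul_prod_erase _ _ hj'mem, hexp]
  have hm : rename (Equiv.swap ci cj) m = m := by
    rw [map_prod]
    apply Finset.prod_congr rfl
    intro k hk
    simp only [Finset.mem_erase] at hk
    rw [map_pow, rename_X, Equiv.swap_apply_of_ne_of_ne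
      (fun hc => hk.2.1 (Fin.castLE_injective ht hc))
      (fun hc => hk.1 (Fin.castLE_injective ht hc))]
  have hu : rename (Equiv.swap ci cj) (xdelta n t ht * d - xdelta n t ht * g)
      = xdelta n t ht * d - xdelta n t ht * g := by
    rw [map_sub, map_mul, map_mul, hsd, hsplit]
    rw [map_mul, map_mul, map_pow, map_pow, rename_X, rename_X,
      Equiv.swap_apply_left, Equiv.swap_apply_right, hm]
    linear_combination (-(m * X ci ^ a * X cj ^ a)) * hd
  have hzero : Asym n t ht (xdelta n t ht * d - xdelta n t ht * g) = 0 :=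
    Asym_swap_zero n t ht hne' hu
  rw [Asym_sub] at hzero
  exact sub_eq_zero.mp hzero

lemma Asym_xdelta_prod (w : Fin t → ℕ) :
    Asym n t ht (xdelta n t ht * ∏ j : Fin t, (X (Fin.castLE ht j) : MvPolynomial (Fin n) ℤ) ^ w j)
      = Matrix.det (Matrix.of fun i j : Fin t =>
          (X (Fin.castLE ht i) : MvPolynomial (Fin n) ℤ) ^ (w j + (t - 1 - (j:ℕ)))) := by
  rw [Matrix.det_apply']
  unfold Asym
  apply Finset.sum_congr rfl
  intro σ _
  rw [zsmul_eq_mul]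
  congr 1
  rw [map_mul, xdelta, rename_EP_prod, rename_EP_prod, ← Finset.prod_mul_distrib]
  apply Finset.prod_congr rfl
  intro k _
  rw [Matrix.of_apply, pow_add]
  ring

lemma antitone_rearrange {t : ℕ} {u v : Fin t → ℕ} (hu : Antitone u) (hv : Antitone v)
    (ρ : Equiv.Perm (Fin t)) (h : u = v ∘ ρ) : u = v := by
  have hsorted : ∀ f : Fin t → ℕ, Antitone f → (List.ofFn f).Pairwise (· ≥ ·) := by
    intro f hf
    rw [List.pairwise_ofFn]
    intro x y hxy
    exact hf hxy.le
  have hperm : (List.ofFn u).Perm (List.ofFn v) := by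
    rw [h]
    exact Equiv.Perm.ofFn_comp_perm ρ v
  have heq : List.ofFn u = List.ofFn v :=
    List.Perm.eq_of_pairwise' (hsorted u hu) (hsorted v hv) hperm
  exact List.ofFn_injective heq

lemma rename_EP_eq_self (f : MvPolynomial (Fin n) ℤ)
    (hstep : ∀ a b : Fin t, (a:ℕ)+1 = (b:ℕ) →
      rename (Equiv.swap (Fin.castLE ht a) (Fin.castLE ht b)) f = f) :
    ∀ σ : Equiv.Perm (Fin t), rename (EP n t ht σ) f = f := by
  have hone : rename (EP n t ht 1) f = f := by
    rw [EP, Equiv.Perm.extendDomain_one]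
    exact rename_id_apply f
  have hmul : ∀ σ τ : Equiv.Perm (Fin t), rename (EP n t ht σ) f = f →
      rename (EP n t ht τ) f = f → rename (EP n t ht (σ * τ)) f = f := by
    intro σ τ hσ hτ
    rw [← EP_mul, Equiv.Perm.coe_mul, ← rename_rename, hτ, hσ]
  cases t with
  | zero =>
    intro σ
    have : σ = 1 := Subsingleton.elim σ 1
    rw [this]; exact hone
  | succ t' =>
    intro σ
    have hσ : σ ∈ Submonoid.closure
        (Set.range fun i : Fin t' => Equiv.swap i.castSucc i.succ) := by
      rw [Equiv.Perm.mclosure_swap_castSucc_succ]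
      trivial
    induction hσ using Submonoid.closure_induction with
    | mem x hx =>
      obtain ⟨i, rfl⟩ := hx
      rw [EP_swap]
      exact hstep i.castSucc i.succ (by simp)
    | one => exact hone
    | mul x y _ _ hx hy => exact hmul x y hx hy

end KeyAux


open KeyAux

/-- if α = (α_1,...,α_t,0,0,...) with α_1 ≤ ... ≤ α_t, then
κ_α = s_{(α_t,...,α_1)}(x_1,...,x_t).  The Schur polynomial is expressed via the
bialternant formula: (Vandermonde determinant) · κ_α = det(x_i^{λ_j + t - j}), where
λ = (α_t,...,α_1). -/
theorem key_eq_schur (n t : ℕ) (ht : t ≤ n) (α : Fin n → ℕ)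
    (hzero : ∀ j : Fin n, t ≤ (j : ℕ) → α j = 0)
    (hmono : ∀ i j : Fin n, i ≤ j → (j : ℕ) < t → α i ≤ α j)
    (f : MvPolynomial (Fin n) ℤ) (hf : IsKey n α f) :
    Matrix.det (Matrix.of fun i j : Fin t =>
        (X (Fin.castLE ht i) : MvPolynomial (Fin n) ℤ) ^ (t - 1 - (j : ℕ))) * f =
    Matrix.det (Matrix.of fun i j : Fin t =>
        (X (Fin.castLE ht i) : MvPolynomial (Fin n) ℤ) ^
          (α (Fin.castLE ht j.rev) + (t - 1 - (j : ℕ)))) := by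
  classical
  set D := Matrix.det (Matrix.of fun i j : Fin t =>
      (X (Fin.castLE ht i) : MvPolynomial (Fin n) ℤ) ^
        (α (Fin.castLE ht j.rev) + (t - 1 - (j : ℕ)))) with hD
  have KEY : ∀ (β : Fin n → ℕ) (g : MvPolynomial (Fin n) ℤ), IsKey n β g →
      (∀ x : Fin n, t ≤ (x:ℕ) → β x = 0) →
      (∃ σ : Equiv.Perm (Fin n), (∀ x : Fin n, t ≤ (x:ℕ) → σ x = x) ∧ β = α ∘ σ) →
      Asym n t ht (xdelta n t ht * g) = D := by
    intro β g hk
    induction hk with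
    | decreasing β hdec =>
      intro hsupp hperm
      have hprodeq : (∏ i : Fin n, (X i : MvPolynomial (Fin n) ℤ) ^ β i)
          = ∏ j : Fin t, (X (Fin.castLE ht j) : MvPolynomial (Fin n) ℤ) ^
              β (Fin.castLE ht j) := by
        have h2 : (∏ j : Fin t, (X (Fin.castLE ht j) : MvPolynomial (Fin n) ℤ) ^
            β (Fin.castLE ht j))
            = ∏ i ∈ Finset.univ.map ⟨Fin.castLE ht, Fin.castLE_injective ht⟩,
              (X i : MvPolynomial (Fin n) ℤ) ^ β i := by
          rw [Finset.prod_map]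
          rfl
        rw [h2]
        apply (Finset.prod_subset (Finset.subset_univ _) ?_).symm
        intro x _ hx
        have hxt : t ≤ (x:ℕ) := by
          by_contra hc; push_neg at hc
          exact hx (Finset.mem_map.mpr ⟨⟨(x:ℕ), hc⟩, Finset.mem_univ _, Fin.ext rfl⟩)
        rw [hsupp x hxt, pow_zero]
      rw [hprodeq, Asym_xdelta_prod]
      obtain ⟨σ, hfix, hβα⟩ := hperm
      have hσt : ∀ x : Fin n, (x:ℕ) < t → ((σ x : Fin n):ℕ) < t := by
        intro x hx
        by_contra hc; push_neg at hc
        have h1 : σ (σ x) = σ x := hfix (σ x) hc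
        have h2 : σ x = x := σ.injective h1
        rw [h2] at hc
        omega
      have huv' : ∀ p : Fin t, β (Fin.castLE ht p) = α (Fin.castLE ht p.rev) := by
        set τ : Fin t → Fin t :=
          fun p => ⟨((σ (Fin.castLE ht p) : Fin n):ℕ), hσt _ p.isLt⟩ with hτ
        have hcτ : ∀ p, Fin.castLE ht (τ p) = σ (Fin.castLE ht p) := by
          intro p
          simp only [hτ]
          exact Fin.ext rfl
        have hτinj : Function.Injective τ := by
          intro p q hpq
          have h2 : σ (Fin.castLE ht p) = σ (Fin.castLE ht q) := by
            rw [← hcτ p, ← hcτ q, hpq]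
          exact Fin.castLE_injective ht (σ.injective h2)
        have hτbij : Function.Bijective τ :=
          (Finite.injective_iff_bijective).mp hτinj
        have huv : (fun p : Fin t => β (Fin.castLE ht p))
            = fun p : Fin t => α (Fin.castLE ht p.rev) := by
          refine antitone_rearrange ?_ ?_
            ((Equiv.ofBijective τ hτbij).trans (Fin.revPerm)) ?_
          · intro p q hpq
            exact hdec (Fin.castLE ht p) (Fin.castLE ht q) (Fin.le_def.mpr hpq)
          · intro p q hpq
            apply hmono (Fin.castLE ht q.rev) (Fin.castLE ht p.rev)
            · rw [Fin.le_def]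
              simp only [Fin.coe_castLE, Fin.val_rev]
              have : (p:ℕ) ≤ (q:ℕ) := hpq
              omega
            · exact (p.rev).isLt
          · funext p
            have h1 : β (Fin.castLE ht p) = α (σ (Fin.castLE ht p)) := by
              rw [hβα]; rfl
            have hρ : (((Equiv.ofBijective τ hτbij).trans Fin.revPerm) p).rev = τ p := by
              simp only [Equiv.trans_apply, Equiv.ofBijective_apply, Fin.revPerm_apply,
                Fin.rev_rev]
            show β (Fin.castLE ht p)
              = α (Fin.castLE ht ((((Equiv.ofBijective τ hτbij).trans Fin.revPerm) p).rev))
            rw [hρ, hcτ p]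
            exact h1
        exact fun p => congrFun huv p
      rw [hD]
      simp_rw [huv']
    | step β i j hij hlt f1 hf1 IH =>
      intro hsupp hperm
      have hjt : (j:ℕ) < t := by
        by_contra hc; push_neg at hc
        rw [hsupp j hc] at hlt; omega
      have hit : (i:ℕ) < t := by omega
      have hsupp' : ∀ x : Fin n, t ≤ (x:ℕ) → (β ∘ Equiv.swap i j) x = 0 := by
        intro x hx
        have hxi : x ≠ i := Fin.ne_of_val_ne (by omega)
        have hxj : x ≠ j := Fin.ne_of_val_ne (by omega)
        show β (Equiv.swap i j x) = 0
        rw [Equiv.swap_apply_of_ne_of_ne hxi hxj]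
        exact hsupp x hx
      have hperm' : ∃ σ : Equiv.Perm (Fin n), (∀ x : Fin n, t ≤ (x:ℕ) → σ x = x) ∧
          (β ∘ Equiv.swap i j) = α ∘ σ := by
        obtain ⟨σ, hfix, hβα⟩ := hperm
        refine ⟨(Equiv.swap i j).trans σ, ?_, ?_⟩
        · intro x hx
          have hxi : x ≠ i := Fin.ne_of_val_ne (by omega)
          have hxj : x ≠ j := Fin.ne_of_val_ne (by omega)
          show σ (Equiv.swap i j x) = x
          rw [Equiv.swap_apply_of_ne_of_ne hxi hxj]
          exact hfix x hx
        · funext x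
          show β (Equiv.swap i j x) = α (σ (Equiv.swap i j x))
          rw [hβα]
          rfl
      have hi' : i = Fin.castLE ht ⟨(i:ℕ), hit⟩ := Fin.ext rfl
      have hj' : j = Fin.castLE ht ⟨(j:ℕ), hjt⟩ := Fin.ext rfl
      rw [hi', hj', Asym_xdelta_demazure n t ht ⟨(i:ℕ),hit⟩ ⟨(j:ℕ),hjt⟩ hij]
      exact IH hsupp' hperm'
  have hA : Asym n t ht (xdelta n t ht * f) = D :=
    KEY α f hf hzero ⟨1, fun x _ => rfl, by funext x; rfl⟩
  have hsymstep : ∀ a b : Fin t, (a:ℕ)+1 = (b:ℕ) →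
      rename (Equiv.swap (Fin.castLE ht a) (Fin.castLE ht b)) f = f := by
    intro a b hab
    have hne : Fin.castLE ht a ≠ Fin.castLE ht b :=
      fun hc => by have := congrArg Fin.val hc; simp at this; omega
    have hcoe : ((Fin.castLE ht a : Fin n):ℕ)+1 = ((Fin.castLE ht b : Fin n):ℕ) := hab
    rcases lt_trichotomy (α (Fin.castLE ht a)) (α (Fin.castLE ht b)) with hlt | heq | hgt
    · obtain ⟨w, hw⟩ := isKey_exists
        (α ∘ Equiv.swap (Fin.castLE ht a) (Fin.castLE ht b))
      have hk : IsKey n α (demazure n (Fin.castLE ht a) (Fin.castLE ht b) w) :=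
        IsKey.step α _ _ hcoe hlt w hw
      rw [isKey_unique hf hk]
      exact rename_swap_demazure hne w
    · exact isKey_symm_aux (Nasc α) α le_rfl f hf _ _ hcoe heq
    · exact absurd (hmono _ _ (Fin.le_def.mpr (by
        show (a:ℕ) ≤ (b:ℕ); omega)) b.isLt) (not_le.mpr hgt)
  have hsymall := rename_EP_eq_self n t ht f hsymstep
  calc Matrix.det (Matrix.of fun i j : Fin t =>
        (X (Fin.castLE ht i) : MvPolynomial (Fin n) ℤ) ^ (t - 1 - (j : ℕ))) * f
      = Asym n t ht (xdelta n t ht * f) := by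
        rw [Matrix.det_apply', Finset.sum_mul]
        unfold Asym
        apply Finset.sum_congr rfl
        intro σ _
        rw [zsmul_eq_mul, map_mul, xdelta, rename_EP_prod, hsymall σ]
        simp only [Matrix.of_apply]
        ring
    _ = D := hA
end

section
/- The leading monomial of the key polynomial κ_α with respect to the pure reverse lexicographic order ≺ is x^α, with coefficient 1; consequently the key polynomials {κ_α} form a ℤ-basis of the polynomial ring. -/
open MvPolynomial Classical

/-- The key polynomial κ_α, as a function (via choice from `IsKey`). -/
noncomputable def keyPoly (n : ℕ) (α : Fin n → ℕ) : MvPolynomial (Fin n) ℤ :=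
  if h : ∃ f, IsKey n α f then h.choose else 0

/-- β ≺ α in the pure reverse lexicographic order: at the last index where they
differ, β is smaller. -/
def RevLexLt (n : ℕ) (β α : Fin n → ℕ) : Prop :=
  ∃ i : Fin n, (∀ j : Fin n, i < j → β j = α j) ∧ β i < α i

namespace KeyProof
variable {n : ℕ}

noncomputable def mexp (β : Fin n → ℕ) : Fin n →₀ ℕ := Finsupp.equivFunOnFinite.symm β

lemma mexp_apply (β : Fin n → ℕ) (k : Fin n) : mexp β k = β k := rfl

lemma mexp_inj : Function.Injective (mexp (n := n)) :=
  Finsupp.equivFunOnFinite.symm.injective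

lemma mexp_coe (d : Fin n →₀ ℕ) : mexp (⇑d) = d :=
  Finsupp.equivFunOnFinite.symm_apply_apply d

lemma coe_mexp (β : Fin n → ℕ) : ⇑(mexp β) = β := rfl

noncomputable def mono (β : Fin n → ℕ) (c : ℤ) : MvPolynomial (Fin n) ℤ :=
  monomial (mexp β) c

def upd (β : Fin n → ℕ) (i j : Fin n) (u v : ℕ) : Fin n → ℕ :=
  fun k => if k = i then u else if k = j then v else β k

lemma upd_i {β : Fin n → ℕ} {i j : Fin n} (hij : i ≠ j) (u v : ℕ) :
    upd β i j u v i = u := by simp [upd]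

lemma upd_j {β : Fin n → ℕ} {i j : Fin n} (hij : i ≠ j) (u v : ℕ) :
    upd β i j u v j = v := by simp [upd, hij.symm]

lemma upd_off {β : Fin n → ℕ} {i j k : Fin n} (hki : k ≠ i) (hkj : k ≠ j) (u v : ℕ) :
    upd β i j u v k = β k := by simp [upd, hki, hkj]

lemma X_mul_mono (i : Fin n) (β : Fin n → ℕ) (c : ℤ) :
    X i * mono β c = mono (Function.update β i (β i + 1)) c := by
  rw [mono, mono, X, monomial_mul, one_mul]
  have h : Finsupp.single i 1 + mexp β = mexp (Function.update β i (β i + 1)) := by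
    ext k
    by_cases hk : k = i
    · subst hk
      simp [mexp_apply, Finsupp.single_apply, Nat.add_comm]
    · simp [mexp_apply, Finsupp.single_apply, Ne.symm hk, Function.update_of_ne hk]
  rw [h]

lemma X_mul_mono_upd {i j : Fin n} (hij : i ≠ j) (β : Fin n → ℕ) (u v : ℕ) (c : ℤ) :
    X i * mono (upd β i j u v) c = mono (upd β i j (u + 1) v) c := by
  rw [X_mul_mono]
  congr 1
  funext k
  by_cases hki : k = i
  · subst hki; simp [upd_i hij]
  · rw [Function.update_of_ne hki]
    by_cases hkj : k = j
    · subst hkj; rw [upd_j hij, upd_j hij]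
    · rw [upd_off hki hkj, upd_off hki hkj]

lemma Xj_mul_mono_upd {i j : Fin n} (hij : i ≠ j) (β : Fin n → ℕ) (u v : ℕ) (c : ℤ) :
    X j * mono (upd β i j u v) c = mono (upd β i j u (v + 1)) c := by
  rw [X_mul_mono]
  congr 1
  funext k
  by_cases hkj : k = j
  · subst hkj; simp [upd_j hij]
  · rw [Function.update_of_ne hkj]
    by_cases hki : k = i
    · subst hki; rw [upd_i hij, upd_i hij]
    · rw [upd_off hki hkj, upd_off hki hkj]

lemma comp_swap_eq_upd {i j : Fin n} (hij : i ≠ j) (β : Fin n → ℕ) :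
    β ∘ Equiv.swap i j = upd β i j (β j) (β i) := by
  funext k
  by_cases hki : k = i
  · subst hki; simp [upd_i hij, Equiv.swap_apply_left]
  · by_cases hkj : k = j
    · subst hkj; simp [upd_j hij, Equiv.swap_apply_right]
    · simp [upd_off hki hkj, Equiv.swap_apply_of_ne_of_ne hki hkj]

lemma rename_mono (i j : Fin n) (β : Fin n → ℕ) (c : ℤ) :
    rename (Equiv.swap i j) (mono β c) = mono (β ∘ Equiv.swap i j) c := by
  rw [mono, rename_monomial, mono]
  have h : Finsupp.mapDomain (⇑(Equiv.swap i j)) (mexp β) = mexp (β ∘ Equiv.swap i j) := by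
    ext k
    rw [Finsupp.mapDomain_equiv_apply]
    simp [mexp_apply, Equiv.symm_swap]
  rw [h]

lemma X_sub_X_ne {i j : Fin n} (hij : i ≠ j) :
    (X i - X j : MvPolynomial (Fin n) ℤ) ≠ 0 := by
  intro h
  have h2 : (X i : MvPolynomial (Fin n) ℤ) = X j := sub_eq_zero.mp h
  have h3 := congrArg (coeff (Finsupp.single i 1)) h2
  rw [coeff_X, coeff_X'] at h3
  rw [if_neg (fun hs => hij ((Finsupp.single_left_inj (one_ne_zero)).mp hs).symm)] at h3
  simp at h3

lemma dvd_sub_rename (i j : Fin n) (f : MvPolynomial (Fin n) ℤ) :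
    (X i - X j : MvPolynomial (Fin n) ℤ) ∣ (f - rename (Equiv.swap i j) f) := by
  rw [← Ideal.mem_span_singleton]
  set I := Ideal.span {(X i - X j : MvPolynomial (Fin n) ℤ)}
  have hmem : (X i - X j : MvPolynomial (Fin n) ℤ) ∈ I := Ideal.subset_span rfl
  have key : (Ideal.Quotient.mk I).comp
      ((rename (Equiv.swap i j) : MvPolynomial (Fin n) ℤ →ₐ[ℤ] MvPolynomial (Fin n) ℤ) :
        MvPolynomial (Fin n) ℤ →+* MvPolynomial (Fin n) ℤ)
      = Ideal.Quotient.mk I := by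
    apply MvPolynomial.ringHom_ext
    · intro a; simp
    · intro k
      simp only [RingHom.comp_apply, AlgHom.coe_toRingHom, rename_X]
      by_cases hki : k = i
      · subst hki
        rw [Equiv.swap_apply_left, Ideal.Quotient.mk_eq_mk_iff_sub_mem]
        exact (neg_mem_iff).mp (by rw [neg_sub]; exact hmem)
      · by_cases hkj : k = j
        · subst hkj
          rw [Equiv.swap_apply_right, Ideal.Quotient.mk_eq_mk_iff_sub_mem]
          exact hmem
        · rw [Equiv.swap_apply_of_ne_of_ne hki hkj]
  have : Ideal.Quotient.mk I (rename (Equiv.swap i j) f) = Ideal.Quotient.mk I f := by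
    have := congrArg (fun g => g f) key
    simpa using this
  exact (Ideal.Quotient.mk_eq_mk_iff_sub_mem _ _).mp this.symm

lemma ddiff_spec (i j : Fin n) (f : MvPolynomial (Fin n) ℤ) :
    (X i - X j) * ddiff n i j f = f - rename (Equiv.swap i j) f := by
  rw [ddiff, dif_pos (dvd_sub_rename i j f)]
  exact (dvd_sub_rename i j f).choose_spec.symm

lemma ddiff_eq {i j : Fin n} (hij : i ≠ j) {f g : MvPolynomial (Fin n) ℤ}
    (hg : (X i - X j) * g = f - rename (Equiv.swap i j) f) :
    ddiff n i j f = g :=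
  mul_left_cancel₀ (X_sub_X_ne hij) (by rw [ddiff_spec, hg])

lemma demazure_eq {i j : Fin n} (hij : i ≠ j) {f g : MvPolynomial (Fin n) ℤ}
    (hg : (X i - X j) * g = X i * f - rename (Equiv.swap i j) (X i * f)) :
    demazure n i j f = g :=
  ddiff_eq hij hg

noncomputable def dem1 (i j : Fin n) (β : Fin n → ℕ) (c : ℤ) : MvPolynomial (Fin n) ℤ :=
  if β j ≤ β i then
    ∑ k ∈ Finset.range (β i + 1 - β j), mono (upd β i j (β j + k) (β i - k)) c
  else
    -∑ k ∈ Finset.range (β j - β i - 1), mono (upd β i j (β i + 1 + k) (β j - 1 - k)) c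

lemma mono_upd_congr {β : Fin n → ℕ} {i j : Fin n} {u v u' v' : ℕ} (c : ℤ)
    (h1 : u = u') (h2 : v = v') :
    mono (upd β i j u v) c = mono (upd β i j u' v') c := by rw [h1, h2]

lemma dem1_spec {i j : Fin n} (hij : i ≠ j) (β : Fin n → ℕ) (c : ℤ) :
    (X i - X j) * dem1 i j β c
      = X i * mono β c - rename (Equiv.swap i j) (X i * mono β c) := by
  have hren : rename (Equiv.swap i j) (X i * mono β c)
      = mono (upd β i j (β j) (β i + 1)) c := by
    rw [map_mul, rename_X, Equiv.swap_apply_left, rename_mono, comp_swap_eq_upd hij,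
      Xj_mul_mono_upd hij]
  have hXi : X i * mono β c = mono (upd β i j (β i + 1) (β j)) c := by
    have hβ : β = upd β i j (β i) (β j) := by
      funext k
      by_cases hki : k = i
      · subst hki; rw [upd_i hij]
      · by_cases hkj : k = j
        · subst hkj; rw [upd_j hij]
        · rw [upd_off hki hkj]
    conv_lhs => rw [hβ]
    rw [X_mul_mono_upd hij]
  set a := β i with ha
  set b := β j with hb
  rw [dem1]
  by_cases hle : b ≤ a
  · rw [if_pos hle]
    set g : ℕ → MvPolynomial (Fin n) ℤ := fun k => mono (upd β i j (b + k) (a + 1 - k)) c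
      with hg
    have key : ∀ k ∈ Finset.range (a + 1 - b),
        (X i - X j) * mono (upd β i j (b + k) (a - k)) c = g (k + 1) - g k := by
      intro k hk
      rw [Finset.mem_range] at hk
      rw [sub_mul, X_mul_mono_upd hij, Xj_mul_mono_upd hij, hg]
      show _ = mono (upd β i j (b + (k + 1)) (a + 1 - (k + 1))) c
          - mono (upd β i j (b + k) (a + 1 - k)) c
      rw [mono_upd_congr c (show b + k + 1 = b + (k+1) by omega)
        (show a - k = a + 1 - (k+1) by omega),
        mono_upd_congr c (rfl : b + k = b + k) (show a - k + 1 = a + 1 - k by omega)]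
    rw [Finset.mul_sum, Finset.sum_congr rfl key, Finset.sum_range_sub g]
    have e4 : g (a + 1 - b) = X i * mono β c := by
      rw [hg, hXi]
      show mono (upd β i j (b + (a + 1 - b)) (a + 1 - (a + 1 - b))) c = _
      rw [mono_upd_congr c (show b + (a+1-b) = a + 1 by omega)
        (show a + 1 - (a+1-b) = b by omega)]
    have e7 : g 0 = rename (Equiv.swap i j) (X i * mono β c) := by
      rw [hg, hren]
      show mono (upd β i j (b + 0) (a + 1 - 0)) c = _
      rw [mono_upd_congr c (show b + 0 = b by omega) (show a + 1 - 0 = a + 1 by omega)]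
    rw [e4, e7]
  · rw [if_neg hle]
    push_neg at hle
    set h : ℕ → MvPolynomial (Fin n) ℤ := fun k => mono (upd β i j (a + 1 + k) (b - k)) c
      with hh
    have key : ∀ k ∈ Finset.range (b - a - 1),
        (X j - X i) * mono (upd β i j (a + 1 + k) (b - 1 - k)) c = h k - h (k + 1) := by
      intro k hk
      rw [Finset.mem_range] at hk
      rw [sub_mul, X_mul_mono_upd hij, Xj_mul_mono_upd hij, hh]
      show _ = mono (upd β i j (a + 1 + k) (b - k)) c
          - mono (upd β i j (a + 1 + (k + 1)) (b - (k + 1))) c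
      rw [mono_upd_congr c (rfl : a + 1 + k = a + 1 + k)
        (show b - 1 - k + 1 = b - k by omega),
        mono_upd_congr c (show a + 1 + k + 1 = a + 1 + (k+1) by omega)
        (show b - 1 - k = b - (k+1) by omega)]
    have : (X i - X j) * -∑ k ∈ Finset.range (b - a - 1),
        mono (upd β i j (a + 1 + k) (b - 1 - k)) c
        = (X j - X i) * ∑ k ∈ Finset.range (b - a - 1),
        mono (upd β i j (a + 1 + k) (b - 1 - k)) c := by ring
    rw [this, Finset.mul_sum, Finset.sum_congr rfl key, Finset.sum_range_sub' h]
    have e4 : h 0 = X i * mono β c := by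
      rw [hh, hXi]
      show mono (upd β i j (a + 1 + 0) (b - 0)) c = _
      rw [mono_upd_congr c (show a + 1 + 0 = a + 1 by omega) (show b - 0 = b by omega)]
    have e7 : h (b - a - 1) = rename (Equiv.swap i j) (X i * mono β c) := by
      rw [hh, hren]
      show mono (upd β i j (a + 1 + (b - a - 1)) (b - (b - a - 1))) c = _
      rw [mono_upd_congr c (show a + 1 + (b-a-1) = b by omega)
        (show b - (b-a-1) = a + 1 by omega)]
    rw [e4, e7]

lemma demazure_mono {i j : Fin n} (hij : i ≠ j) (β : Fin n → ℕ) (c : ℤ) :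
    demazure n i j (mono β c) = dem1 i j β c :=
  demazure_eq hij (dem1_spec hij β c)

lemma demazure_as_sum {i j : Fin n} (hij : i ≠ j) (f : MvPolynomial (Fin n) ℤ) :
    demazure n i j f = ∑ d ∈ f.support, dem1 i j (⇑d) (coeff d f) := by
  apply demazure_eq hij
  rw [Finset.mul_sum]
  have step : ∀ d ∈ f.support, (X i - X j) * dem1 i j (⇑d) (coeff d f)
      = X i * monomial d (coeff d f)
        - rename (Equiv.swap i j) (X i * monomial d (coeff d f)) := by
    intro d _
    have := dem1_spec hij (⇑d) (coeff d f)
    rwa [mono, mexp_coe] at this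
  rw [Finset.sum_congr rfl step, Finset.sum_sub_distrib, ← Finset.mul_sum, ← map_sum,
    ← Finset.mul_sum, support_sum_monomial_coeff]

lemma dem1_coeff_ne {i j : Fin n} (hij : i ≠ j) {β γ : Fin n → ℕ} {c : ℤ}
    (h : coeff (mexp γ) (dem1 i j β c) ≠ 0) :
    (∀ k, k ≠ i → k ≠ j → γ k = β k) ∧ γ i + γ j = β i + β j ∧
      γ i ≤ max (β i) (β j) ∧ γ j ≤ max (β i) (β j) := by
  rw [dem1] at h
  have main : ∀ u v : ℕ, γ = upd β i j u v → u + v = β i + β j →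
      u ≤ max (β i) (β j) → v ≤ max (β i) (β j) →
      (∀ k, k ≠ i → k ≠ j → γ k = β k) ∧ γ i + γ j = β i + β j ∧
        γ i ≤ max (β i) (β j) ∧ γ j ≤ max (β i) (β j) := by
    intro u v hγ hsum hu hv
    refine ⟨fun k hki hkj => by rw [hγ, upd_off hki hkj], ?_, ?_, ?_⟩ <;>
      simp only [hγ, upd_i hij, upd_j hij] <;> first | exact hsum | exact hu | exact hv
  by_cases hle : β j ≤ β i
  · rw [if_pos hle, MvPolynomial.coeff_sum] at h
    obtain ⟨k, hk, hne⟩ := Finset.exists_ne_zero_of_sum_ne_zero h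
    rw [Finset.mem_range] at hk
    rw [mono, coeff_monomial] at hne
    have hcond : mexp (upd β i j (β j + k) (β i - k)) = mexp γ := by
      by_contra hc
      exact hne (if_neg hc)
    have heq : γ = upd β i j (β j + k) (β i - k) := (mexp_inj hcond).symm
    exact main _ _ heq (by omega) (by omega) (by omega)
  · rw [if_neg hle, coeff_neg, neg_ne_zero, MvPolynomial.coeff_sum] at h
    push_neg at hle
    obtain ⟨k, hk, hne⟩ := Finset.exists_ne_zero_of_sum_ne_zero h
    rw [Finset.mem_range] at hk
    rw [mono, coeff_monomial] at hne
    have hcond : mexp (upd β i j (β i + 1 + k) (β j - 1 - k)) = mexp γ := by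
      by_contra hc
      exact hne (if_neg hc)
    have heq : γ = upd β i j (β i + 1 + k) (β j - 1 - k) := (mexp_inj hcond).symm
    exact main _ _ heq (by omega) (by omega) (by omega)

lemma dem1_coeff_delta {i j : Fin n} (hij : i ≠ j) {δ : Fin n → ℕ} (hlt : δ i < δ j)
    (c : ℤ) : coeff (mexp δ) (dem1 i j (δ ∘ Equiv.swap i j) c) = c := by
  set β := δ ∘ Equiv.swap i j with hβ
  have hbi : β i = δ j := by rw [hβ]; simp [Equiv.swap_apply_left]
  have hbj : β j = δ i := by rw [hβ]; simp [Equiv.swap_apply_right]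
  have hle : β j ≤ β i := by omega
  rw [dem1, if_pos hle, MvPolynomial.coeff_sum]
  have hterm : ∀ k ∈ Finset.range (β i + 1 - β j),
      coeff (mexp δ) (mono (upd β i j (β j + k) (β i - k)) c)
        = if k = 0 then c else 0 := by
    intro k hk
    rw [mono, coeff_monomial]
    by_cases hk0 : k = 0
    · subst hk0
      rw [if_pos, if_pos rfl]
      apply congrArg
      funext m
      by_cases hmi : m = i
      · subst hmi; rw [upd_i hij]; omega
      · by_cases hmj : m = j
        · subst hmj; rw [upd_j hij]; omega
        · rw [upd_off hmi hmj, hβ]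
          simp [Equiv.swap_apply_of_ne_of_ne hmi hmj]
    · rw [if_neg, if_neg hk0]
      intro hc
      have h5 := DFunLike.congr_fun hc i
      simp only [mexp_apply] at h5
      rw [upd_i hij] at h5
      omega
  rw [Finset.sum_congr rfl hterm, Finset.sum_ite_eq' (Finset.range (β i + 1 - β j)) 0
    (fun _ => c)]
  rw [if_pos (Finset.mem_range.mpr (by omega))]


def Suffix (n m : ℕ) : Finset (Fin n) := Finset.univ.filter (fun k => m ≤ k.val)

noncomputable def cnt (T : Finset (Fin n)) (m : ℕ) : ℕ :=
  (T.filter (fun k => m ≤ k.val)).card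

def Shift (S T : Finset (Fin n)) : Prop :=
  T.card = S.card ∧ ∀ m : ℕ, cnt S m ≤ cnt T m

noncomputable def theta (δ : Fin n → ℕ) (S : Finset (Fin n)) : ℕ :=
  (Finset.univ.powerset.filter (fun T => Shift S T)).sup (fun T => ∑ k ∈ T, δ k)

lemma shift_refl (S : Finset (Fin n)) : Shift S S := ⟨rfl, fun _ => le_refl _⟩

lemma sum_le_theta {δ : Fin n → ℕ} {S T : Finset (Fin n)} (h : Shift S T) :
    ∑ k ∈ T, δ k ≤ theta δ S :=
  Finset.le_sup (f := fun T => ∑ k ∈ T, δ k)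
    (Finset.mem_filter.mpr ⟨Finset.mem_powerset.mpr (Finset.subset_univ T), h⟩)

lemma theta_le {δ : Fin n → ℕ} {S : Finset (Fin n)} {B : ℕ}
    (h : ∀ T, Shift S T → ∑ k ∈ T, δ k ≤ B) : theta δ S ≤ B :=
  Finset.sup_le (fun T hT => h T (Finset.mem_filter.mp hT).2)

lemma self_le_theta (δ : Fin n → ℕ) (S : Finset (Fin n)) : ∑ k ∈ S, δ k ≤ theta δ S :=
  sum_le_theta (shift_refl S)

lemma mem_suffix_iff {m : ℕ} {k : Fin n} : k ∈ Suffix n m ↔ m ≤ (k : ℕ) := by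
  simp [Suffix]

lemma cnt_eq_card_of_subset {T : Finset (Fin n)} {m : ℕ} (h : T ⊆ Suffix n m) :
    cnt T m = T.card := by
  rw [cnt, Finset.filter_true_of_mem (fun k hk => mem_suffix_iff.mp (h hk))]

lemma subset_suffix_of_card_le {T : Finset (Fin n)} {m : ℕ} (h : T.card ≤ cnt T m) :
    T ⊆ Suffix n m := by
  have heq : T.filter (fun k => m ≤ k.val) = T :=
    Finset.eq_of_subset_of_card_le (Finset.filter_subset _ _) h
  intro x hx
  rw [← heq] at hx
  exact mem_suffix_iff.mpr (Finset.mem_filter.mp hx).2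

lemma cnt_insert {T : Finset (Fin n)} {a : Fin n} (h : a ∉ T) (m : ℕ) :
    cnt (insert a T) m = (if m ≤ (a : ℕ) then 1 else 0) + cnt T m := by
  rw [cnt, Finset.filter_insert]
  split_ifs with hm
  · rw [Finset.card_insert_of_notMem (fun hc => h (Finset.mem_of_mem_filter _ hc))]
    rw [cnt]; omega
  · rw [cnt, zero_add]

lemma cnt_erase {T : Finset (Fin n)} {a : Fin n} (h : a ∈ T) (m : ℕ) :
    cnt T m = (if m ≤ (a : ℕ) then 1 else 0) + cnt (T.erase a) m := by
  conv_lhs => rw [← Finset.insert_erase h]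
  rw [cnt_insert (Finset.notMem_erase a T)]

lemma cnt_succ (T : Finset (Fin n)) (i : Fin n) :
    cnt T (i : ℕ) = cnt T ((i : ℕ) + 1) + (if i ∈ T then 1 else 0) := by
  rw [cnt, cnt, Finset.card_filter, Finset.card_filter]
  have key : ∀ k ∈ T, (if (i : ℕ) ≤ (k : ℕ) then 1 else 0)
      = ((if (i : ℕ) + 1 ≤ (k : ℕ) then 1 else 0) + if k = i then 1 else 0) := by
    intro k _
    by_cases hk : k = i
    · subst hk; simp
    · have hne : (k : ℕ) ≠ (i : ℕ) := fun hc => hk (Fin.ext hc)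
      rw [if_neg hk, add_zero]
      by_cases h2 : (i : ℕ) + 1 ≤ (k : ℕ)
      · rw [if_pos h2, if_pos (by omega)]
      · rw [if_neg h2, if_neg (by omega)]
  rw [Finset.sum_congr rfl key, Finset.sum_add_distrib,
    Finset.sum_ite_eq' T i (fun _ => 1)]

lemma suffix_eq_insert (j : Fin n) : Suffix n (j : ℕ) = insert j (Suffix n ((j : ℕ) + 1)) := by
  ext k
  simp only [mem_suffix_iff, Finset.mem_insert]
  rw [Fin.ext_iff]
  omega

lemma not_mem_suffix (j : Fin n) : j ∉ Suffix n ((j : ℕ) + 1) := by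
  rw [mem_suffix_iff]; omega

lemma theta_suffix (δ : Fin n → ℕ) (m : ℕ) :
    theta δ (Suffix n m) = ∑ k ∈ Suffix n m, δ k := by
  refine le_antisymm (theta_le ?_) (self_le_theta δ _)
  rintro T ⟨hc, hcnt⟩
  have h1 : cnt (Suffix n m) m = (Suffix n m).card :=
    cnt_eq_card_of_subset (Finset.Subset.refl _)
  have h2 : T.card ≤ cnt T m := by
    have := hcnt m
    omega
  have hsub : T ⊆ Suffix n m := subset_suffix_of_card_le h2
  have : T = Suffix n m := Finset.eq_of_subset_of_card_le hsub (by omega)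
  rw [this]

lemma theta_pair {i j : Fin n} (hij : (i : ℕ) + 1 = (j : ℕ)) (δ : Fin n → ℕ) :
    theta δ (insert i (Suffix n ((j : ℕ) + 1)))
      ≤ max (δ i) (δ j) + ∑ k ∈ Suffix n ((j : ℕ) + 1), δ k := by
  apply theta_le
  rintro T ⟨hcard, hcnt⟩
  set Sf := Suffix n ((j : ℕ) + 1) with hSf
  have hiS : i ∉ Sf := by rw [hSf, mem_suffix_iff]; omega
  have hcS : (insert i Sf).card = Sf.card + 1 := Finset.card_insert_of_notMem hiS
  have hSfsub : ∀ m : ℕ, m ≤ (j : ℕ) + 1 → Sf ⊆ Suffix n m := by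
    intro m hm x hx
    rw [hSf, mem_suffix_iff] at hx
    rw [mem_suffix_iff]; omega
  have h1 : cnt (insert i Sf) ((j : ℕ) + 1) = Sf.card := by
    rw [cnt_insert hiS, if_neg (by omega), cnt_eq_card_of_subset (Finset.Subset.refl _),
      zero_add]
  have h2 : Sf.card ≤ cnt T ((j : ℕ) + 1) := by
    have := hcnt ((j : ℕ) + 1); omega
  have hsub : Sf ⊆ T := by
    have hfsub : T.filter (fun k => (j : ℕ) + 1 ≤ k.val) ⊆ Sf := by
      intro x hx
      rw [hSf, mem_suffix_iff]
      exact (Finset.mem_filter.mp hx).2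
    have : T.filter (fun k => (j : ℕ) + 1 ≤ k.val) = Sf :=
      Finset.eq_of_subset_of_card_le hfsub h2
    rw [← this]
    exact Finset.filter_subset _ _
  have hdiff : (T \ Sf).card = 1 := by
    rw [Finset.card_sdiff_of_subset hsub]; omega
  obtain ⟨t, ht⟩ := Finset.card_eq_one.mp hdiff
  have htT : t ∈ T ∧ t ∉ Sf := by
    have : t ∈ T \ Sf := by rw [ht]; exact Finset.mem_singleton_self t
    exact Finset.mem_sdiff.mp this
  have hTeq : T = insert t Sf := by
    ext x
    constructor
    · intro hx
      by_cases hxS : x ∈ Sf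
      · exact Finset.mem_insert_of_mem hxS
      · have : x ∈ T \ Sf := Finset.mem_sdiff.mpr ⟨hx, hxS⟩
        rw [ht, Finset.mem_singleton] at this
        rw [this]; exact Finset.mem_insert_self t Sf
    · intro hx
      rcases Finset.mem_insert.mp hx with h | h
      · rw [h]; exact htT.1
      · exact hsub h
  have hcnti : cnt (insert i Sf) (i : ℕ) = Sf.card + 1 := by
    rw [cnt_insert hiS, if_pos (le_refl _),
      cnt_eq_card_of_subset (hSfsub (i : ℕ) (by omega))]
    omega
  have h4 : Sf.card + 1 ≤ cnt T (i : ℕ) := by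
    have := hcnt (i : ℕ); omega
  have h5 : cnt T (i : ℕ) = (if (i : ℕ) ≤ (t : ℕ) then 1 else 0) + Sf.card := by
    rw [hTeq, cnt_insert htT.2, cnt_eq_card_of_subset (hSfsub (i : ℕ) (by omega))]
  have hti : (i : ℕ) ≤ (t : ℕ) := by
    by_contra hc
    rw [if_neg hc] at h5
    omega
  have htj : (t : ℕ) ≤ (j : ℕ) := by
    have := htT.2
    rw [hSf, mem_suffix_iff] at this
    omega
  have htij : t = i ∨ t = j := by
    rcases (show (t : ℕ) = (i : ℕ) ∨ (t : ℕ) = (j : ℕ) by omega) with h | h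
    · exact Or.inl (Fin.ext h)
    · exact Or.inr (Fin.ext h)
  rw [hTeq, Finset.sum_insert htT.2]
  apply add_le_add_left
  rcases htij with h | h
  · rw [h]; exact le_max_left _ _
  · rw [h]; exact le_max_right _ _

lemma theta_step {δ : Fin n → ℕ} {i j : Fin n} (hij : (i : ℕ) + 1 = (j : ℕ))
    (hlt : δ i < δ j) {S S' : Finset (Fin n)} (hcard : S'.card = S.card)
    (hallow : ∀ m : ℕ, cnt S m ≤ cnt S' m + (if m = (j : ℕ) then 1 else 0)) :
    theta (δ ∘ Equiv.swap i j) S' ≤ theta δ S := by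
  have hij' : i ≠ j := fun e => by rw [e] at hij; omega
  apply theta_le
  rintro T ⟨hTc, hTcnt⟩
  by_cases hT : i ∈ T ∧ j ∉ T
  · set T' := insert j (T.erase i) with hT'
    have hjT' : j ∉ T.erase i := fun h => hT.2 (Finset.mem_of_mem_erase h)
    have hsum : ∑ k ∈ T, (δ ∘ Equiv.swap i j) k = ∑ k ∈ T', δ k := by
      rw [hT', Finset.sum_insert hjT', ← Finset.add_sum_erase T _ hT.1]
      congr 1
      · simp [Equiv.swap_apply_left]
      · refine Finset.sum_congr rfl (fun k hk => ?_)
        have hki : k ≠ i := Finset.ne_of_mem_erase hk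
        have hkj : k ≠ j := fun hc => hT.2 (hc ▸ Finset.mem_of_mem_erase hk)
        simp [Equiv.swap_apply_of_ne_of_ne hki hkj]
    have hTpos : 1 ≤ T.card := Finset.card_pos.mpr ⟨i, hT.1⟩
    have hShift : Shift S T' := by
      constructor
      · rw [hT', Finset.card_insert_of_notMem hjT', Finset.card_erase_of_mem hT.1]
        omega
      · intro m
        have e1 : cnt T' m = (if m ≤ (j : ℕ) then 1 else 0) + cnt (T.erase i) m := by
          rw [hT', cnt_insert hjT']
        have e2 : cnt T m = (if m ≤ (i : ℕ) then 1 else 0) + cnt (T.erase i) m :=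
          cnt_erase hT.1 m
        have h1 := hallow m
        have h2 := hTcnt m
        split_ifs at e1 e2 h1 <;> omega
    exact le_trans (le_of_eq hsum) (sum_le_theta hShift)
  · have hle : ∑ k ∈ T, (δ ∘ Equiv.swap i j) k ≤ ∑ k ∈ T, δ k := by
      by_cases hjT : j ∈ T
      · by_cases hiT : i ∈ T
        · refine le_of_eq ?_
          have hjT2 : j ∈ T.erase i := Finset.mem_erase.mpr ⟨hij'.symm, hjT⟩
          rw [← Finset.add_sum_erase T (δ ∘ Equiv.swap i j) hiT,
            ← Finset.add_sum_erase T δ hiT,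
            ← Finset.add_sum_erase _ (δ ∘ Equiv.swap i j) hjT2,
            ← Finset.add_sum_erase _ δ hjT2]
          have hrest : ∑ k ∈ (T.erase i).erase j, (δ ∘ Equiv.swap i j) k
              = ∑ k ∈ (T.erase i).erase j, δ k := by
            refine Finset.sum_congr rfl (fun k hk => ?_)
            have hkj : k ≠ j := Finset.ne_of_mem_erase hk
            have hki : k ≠ i := Finset.ne_of_mem_erase (Finset.mem_of_mem_erase hk)
            simp [Equiv.swap_apply_of_ne_of_ne hki hkj]
          rw [hrest]
          simp only [Function.comp_apply, Equiv.swap_apply_left, Equiv.swap_apply_right]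
          omega
        · rw [← Finset.add_sum_erase T (δ ∘ Equiv.swap i j) hjT,
            ← Finset.add_sum_erase T δ hjT]
          have hrest : ∑ k ∈ T.erase j, (δ ∘ Equiv.swap i j) k
              = ∑ k ∈ T.erase j, δ k := by
            refine Finset.sum_congr rfl (fun k hk => ?_)
            have hkj : k ≠ j := Finset.ne_of_mem_erase hk
            have hki : k ≠ i := fun hc => hiT (hc ▸ Finset.mem_of_mem_erase hk)
            simp [Equiv.swap_apply_of_ne_of_ne hki hkj]
          rw [hrest]
          apply add_le_add_left
          simp only [Function.comp_apply, Equiv.swap_apply_right]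
          omega
      · have hiT : i ∉ T := fun h => hT ⟨h, hjT⟩
        refine le_of_eq (Finset.sum_congr rfl (fun k hk => ?_))
        have hki : k ≠ i := fun hc => hiT (hc ▸ hk)
        have hkj : k ≠ j := fun hc => hjT (hc ▸ hk)
        simp [Equiv.swap_apply_of_ne_of_ne hki hkj]
    have hShift : Shift S T := by
      refine ⟨hTc.trans hcard, fun m => ?_⟩
      by_cases hm : m = (j : ℕ)
      · subst hm
        by_contra hc
        push_neg at hc
        have h1 := hallow (j : ℕ)
        rw [if_pos rfl] at h1
        have h2 := hTcnt (j : ℕ)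
        have hSj : cnt S (j : ℕ) = cnt T (j : ℕ) + 1 := by omega
        have ei_S := cnt_succ S i
        have ei_T := cnt_succ T i
        have ej_S := cnt_succ S j
        have ej_T := cnt_succ T j
        rw [hij] at ei_S ei_T
        have hi : cnt S (i : ℕ) ≤ cnt T (i : ℕ) := by
          have ha := hallow (i : ℕ)
          rw [if_neg (by omega)] at ha
          have := hTcnt (i : ℕ)
          omega
        have hj1 : cnt S ((j : ℕ) + 1) ≤ cnt T ((j : ℕ) + 1) := by
          have ha := hallow ((j : ℕ) + 1)
          rw [if_neg (by omega)] at ha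
          have := hTcnt ((j : ℕ) + 1)
          omega
        have hiT : i ∈ T := by
          by_contra hiT
          rw [if_neg hiT] at ei_T
          split_ifs at ei_S <;> omega
        have hjT : j ∈ T := by
          by_contra hj
          exact hT ⟨hiT, hj⟩
        rw [if_pos hjT] at ej_T
        split_ifs at ej_S <;> omega
      · have h1 := hallow m
        rw [if_neg hm] at h1
        have := hTcnt m
        omega
    exact le_trans hle (sum_le_theta hShift)


def Inv (δ β : Fin n → ℕ) : Prop :=
  (∑ k, β k = ∑ k, δ k) ∧ ∀ S : Finset (Fin n), ∑ k ∈ S, β k ≤ theta δ S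

lemma inv_self (δ : Fin n → ℕ) : Inv δ δ := ⟨rfl, fun S => self_le_theta δ S⟩

/-- From the invariant, any β ≠ δ is smaller in reverse lexicographic order. -/
lemma inv_revlex {δ β : Fin n → ℕ} (hinv : Inv δ β) (hne : β ≠ δ) :
    ∃ i : Fin n, (∀ j : Fin n, i < j → β j = δ j) ∧ β i < δ i := by
  have hF : (Finset.univ.filter (fun k => β k ≠ δ k)).Nonempty := by
    by_contra hc
    rw [Finset.not_nonempty_iff_eq_empty] at hc
    apply hne
    funext k
    by_contra hk
    have : k ∈ Finset.univ.filter (fun k => β k ≠ δ k) :=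
      Finset.mem_filter.mpr ⟨Finset.mem_univ k, hk⟩
    rw [hc] at this
    exact absurd this (Finset.notMem_empty k)
  set m₀ := (Finset.univ.filter (fun k => β k ≠ δ k)).max' hF with hm₀
  have hm₀mem : m₀ ∈ Finset.univ.filter (fun k => β k ≠ δ k) := Finset.max'_mem _ hF
  have hm₀ne : β m₀ ≠ δ m₀ := (Finset.mem_filter.mp hm₀mem).2
  have hagree : ∀ k : Fin n, m₀ < k → β k = δ k := by
    intro k hk
    by_contra hkne
    have : k ∈ Finset.univ.filter (fun k => β k ≠ δ k) :=
      Finset.mem_filter.mpr ⟨Finset.mem_univ k, hkne⟩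
    have := Finset.le_max' _ k this
    exact absurd hk (not_lt.mpr this)
  refine ⟨m₀, hagree, ?_⟩
  have hb := hinv.2 (Suffix n (m₀ : ℕ))
  rw [theta_suffix] at hb
  rw [suffix_eq_insert m₀, Finset.sum_insert (not_mem_suffix m₀),
    Finset.sum_insert (not_mem_suffix m₀)] at hb
  have heqs : ∑ k ∈ Suffix n ((m₀ : ℕ) + 1), β k = ∑ k ∈ Suffix n ((m₀ : ℕ) + 1), δ k := by
    refine Finset.sum_congr rfl (fun k hk => ?_)
    rw [mem_suffix_iff] at hk
    exact hagree k (by rw [Fin.lt_def]; omega)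
  rw [heqs] at hb
  have : β m₀ ≤ δ m₀ := by omega
  omega

/-- The unique-preimage lemma: if applying the move to β can produce δ itself,
then β must be δ∘swap. -/
lemma inv_unique_pre {δ β : Fin n → ℕ} {i j : Fin n} (hij : (i : ℕ) + 1 = (j : ℕ))
    (hlt : δ i < δ j) (hinv : Inv (δ ∘ Equiv.swap i j) β)
    (hoff : ∀ k, k ≠ i → k ≠ j → β k = δ k) (hsum : β i + β j = δ i + δ j) :
    β = δ ∘ Equiv.swap i j := by
  have hij' : i ≠ j := fun e => by rw [e] at hij; omega
  set δb := δ ∘ Equiv.swap i j with hδb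
  have hδbi : δb i = δ j := by rw [hδb]; simp [Equiv.swap_apply_left]
  have hδbj : δb j = δ i := by rw [hδb]; simp [Equiv.swap_apply_right]
  have hδboff : ∀ k, k ≠ i → k ≠ j → δb k = δ k := by
    intro k hki hkj
    rw [hδb]; simp [Equiv.swap_apply_of_ne_of_ne hki hkj]
  have hRβ : ∑ k ∈ Suffix n ((j : ℕ) + 1), β k = ∑ k ∈ Suffix n ((j : ℕ) + 1), δb k := by
    refine Finset.sum_congr rfl (fun k hk => ?_)
    rw [mem_suffix_iff] at hk
    have hki : k ≠ i := fun hc => by rw [hc] at hk; omega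
    have hkj : k ≠ j := fun hc => by rw [hc] at hk; omega
    rw [hoff k hki hkj, hδboff k hki hkj]
  -- bound β j
  have hb1 := hinv.2 (Suffix n (j : ℕ))
  rw [theta_suffix] at hb1
  rw [suffix_eq_insert j, Finset.sum_insert (not_mem_suffix j),
    Finset.sum_insert (not_mem_suffix j), hRβ] at hb1
  have hbj : β j ≤ δ i := by rw [hδbj] at hb1; omega
  -- bound β i
  have hiS : i ∉ Suffix n ((j : ℕ) + 1) := by rw [mem_suffix_iff]; omega
  have hb2 := hinv.2 (insert i (Suffix n ((j : ℕ) + 1)))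
  rw [Finset.sum_insert hiS, hRβ] at hb2
  have hb3 := theta_pair hij δb
  have hmax : max (δb i) (δb j) = δ j := by rw [hδbi, hδbj]; omega
  rw [hmax] at hb3
  have hbi : β i ≤ δ j := by
    have := le_trans hb2 hb3
    omega
  have hbi' : β i = δ j := by omega
  have hbj' : β j = δ i := by omega
  funext k
  by_cases hki : k = i
  · subst hki; rw [hbi', hδbi]
  · by_cases hkj : k = j
    · subst hkj; rw [hbj', hδbj]
    · rw [hoff k hki hkj, hδboff k hki hkj]

/-- Preservation of the invariant under the Demazure move. -/
lemma inv_step {δ β γ : Fin n → ℕ} {i j : Fin n} (hij : (i : ℕ) + 1 = (j : ℕ))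
    (hlt : δ i < δ j) (hinv : Inv (δ ∘ Equiv.swap i j) β)
    (hoff : ∀ k, k ≠ i → k ≠ j → γ k = β k) (hsum : γ i + γ j = β i + β j)
    (hmi : γ i ≤ max (β i) (β j)) (hmj : γ j ≤ max (β i) (β j)) :
    Inv δ γ := by
  have hij' : i ≠ j := fun e => by rw [e] at hij; omega
  set δb := δ ∘ Equiv.swap i j with hδb
  constructor
  · -- total degree
    have h1 : ∑ k, γ k = ∑ k, β k := by
      have hiu : i ∈ Finset.univ := Finset.mem_univ i
      have hju2 : j ∈ Finset.univ.erase i := Finset.mem_erase.mpr ⟨hij'.symm, Finset.mem_univ j⟩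
      rw [← Finset.add_sum_erase _ γ hiu, ← Finset.add_sum_erase _ β hiu,
        ← Finset.add_sum_erase _ γ hju2, ← Finset.add_sum_erase _ β hju2]
      have hrest : ∑ k ∈ (Finset.univ.erase i).erase j, γ k
          = ∑ k ∈ (Finset.univ.erase i).erase j, β k := by
        refine Finset.sum_congr rfl (fun k hk => ?_)
        exact hoff k (Finset.ne_of_mem_erase (Finset.mem_of_mem_erase hk))
          (Finset.ne_of_mem_erase hk)
      rw [hrest]
      omega
    have h2 : ∑ k, β k = ∑ k, δb k := hinv.1
    have h3 : ∑ k, δb k = ∑ k, δ k := Equiv.sum_comp (Equiv.swap i j) δ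
    omega
  · intro S
    by_cases hiS : i ∈ S
    · by_cases hjS : j ∈ S
      · -- both in S
        have hjS2 : j ∈ S.erase i := Finset.mem_erase.mpr ⟨hij'.symm, hjS⟩
        have hγβ : ∑ k ∈ S, γ k = ∑ k ∈ S, β k := by
          rw [← Finset.add_sum_erase _ γ hiS, ← Finset.add_sum_erase _ β hiS,
            ← Finset.add_sum_erase _ γ hjS2, ← Finset.add_sum_erase _ β hjS2]
          have hrest : ∑ k ∈ (S.erase i).erase j, γ k
              = ∑ k ∈ (S.erase i).erase j, β k := by
            refine Finset.sum_congr rfl (fun k hk => ?_)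
            exact hoff k (Finset.ne_of_mem_erase (Finset.mem_of_mem_erase hk))
              (Finset.ne_of_mem_erase hk)
          rw [hrest]
          omega
        calc ∑ k ∈ S, γ k = ∑ k ∈ S, β k := hγβ
          _ ≤ theta δb S := hinv.2 S
          _ ≤ theta δ S := theta_step hij hlt rfl
              (fun m => by split_ifs <;> omega)
      · -- i ∈ S, j ∉ S
        have hrest : ∑ k ∈ S.erase i, γ k = ∑ k ∈ S.erase i, β k := by
          refine Finset.sum_congr rfl (fun k hk => ?_)
          exact hoff k (Finset.ne_of_mem_erase hk)
            (fun hc => hjS (hc ▸ Finset.mem_of_mem_erase hk))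
        have hjS2 : j ∉ S.erase i := fun h => hjS (Finset.mem_of_mem_erase h)
        have hS2card : (insert j (S.erase i)).card = S.card := by
          rw [Finset.card_insert_of_notMem hjS2, Finset.card_erase_of_mem hiS]
          have : 1 ≤ S.card := Finset.card_pos.mpr ⟨i, hiS⟩
          omega
        have hS2allow : ∀ m : ℕ, cnt S m
            ≤ cnt (insert j (S.erase i)) m + (if m = (j : ℕ) then 1 else 0) := by
          intro m
          have e1 : cnt (insert j (S.erase i)) m
              = (if m ≤ (j : ℕ) then 1 else 0) + cnt (S.erase i) m := cnt_insert hjS2 m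
          have e2 : cnt S m = (if m ≤ (i : ℕ) then 1 else 0) + cnt (S.erase i) m :=
            cnt_erase hiS m
          split_ifs at e1 e2 ⊢ <;> omega
        have hb1 : ∑ k ∈ S, β k ≤ theta δ S :=
          le_trans (hinv.2 S) (theta_step hij hlt rfl (fun m => by split_ifs <;> omega))
        have hb2 : β j + ∑ k ∈ S.erase i, β k ≤ theta δ S := by
          have : β j + ∑ k ∈ S.erase i, β k = ∑ k ∈ insert j (S.erase i), β k :=
            (Finset.sum_insert hjS2).symm
          rw [this]
          exact le_trans (hinv.2 _) (theta_step hij hlt hS2card hS2allow)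
        have hSγ : ∑ k ∈ S, γ k = γ i + ∑ k ∈ S.erase i, γ k :=
          (Finset.add_sum_erase _ γ hiS).symm
        have hSβ : ∑ k ∈ S, β k = β i + ∑ k ∈ S.erase i, β k :=
          (Finset.add_sum_erase _ β hiS).symm
        rw [hSγ, hrest]
        rcases max_cases (β i) (β j) with ⟨hm, _⟩ | ⟨hm, _⟩
        · rw [hm] at hmi
          omega
        · rw [hm] at hmi
          omega
    · by_cases hjS : j ∈ S
      · -- j ∈ S, i ∉ S
        have hrest : ∑ k ∈ S.erase j, γ k = ∑ k ∈ S.erase j, β k := by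
          refine Finset.sum_congr rfl (fun k hk => ?_)
          exact hoff k (fun hc => hiS (hc ▸ Finset.mem_of_mem_erase hk))
            (Finset.ne_of_mem_erase hk)
        have hiS2 : i ∉ S.erase j := fun h => hiS (Finset.mem_of_mem_erase h)
        have hS3card : (insert i (S.erase j)).card = S.card := by
          rw [Finset.card_insert_of_notMem hiS2, Finset.card_erase_of_mem hjS]
          have : 1 ≤ S.card := Finset.card_pos.mpr ⟨j, hjS⟩
          omega
        have hS3allow : ∀ m : ℕ, cnt S m
            ≤ cnt (insert i (S.erase j)) m + (if m = (j : ℕ) then 1 else 0) := by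
          intro m
          have e1 : cnt (insert i (S.erase j)) m
              = (if m ≤ (i : ℕ) then 1 else 0) + cnt (S.erase j) m := cnt_insert hiS2 m
          have e2 : cnt S m = (if m ≤ (j : ℕ) then 1 else 0) + cnt (S.erase j) m :=
            cnt_erase hjS m
          split_ifs at e1 e2 ⊢ <;> omega
        have hb1 : ∑ k ∈ S, β k ≤ theta δ S :=
          le_trans (hinv.2 S) (theta_step hij hlt rfl (fun m => by split_ifs <;> omega))
        have hb2 : β i + ∑ k ∈ S.erase j, β k ≤ theta δ S := by
          have : β i + ∑ k ∈ S.erase j, β k = ∑ k ∈ insert i (S.erase j), β k :=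
            (Finset.sum_insert hiS2).symm
          rw [this]
          exact le_trans (hinv.2 _) (theta_step hij hlt hS3card hS3allow)
        have hSγ : ∑ k ∈ S, γ k = γ j + ∑ k ∈ S.erase j, γ k :=
          (Finset.add_sum_erase _ γ hjS).symm
        have hSβ : ∑ k ∈ S, β k = β j + ∑ k ∈ S.erase j, β k :=
          (Finset.add_sum_erase _ β hjS).symm
        rw [hSγ, hrest]
        rcases max_cases (β i) (β j) with ⟨hm, _⟩ | ⟨hm, _⟩
        · rw [hm] at hmj
          omega
        · rw [hm] at hmj
          omega
      · -- neither
        have hγβ : ∑ k ∈ S, γ k = ∑ k ∈ S, β k := by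
          refine Finset.sum_congr rfl (fun k hk => ?_)
          exact hoff k (fun hc => hiS (hc ▸ hk)) (fun hc => hjS (hc ▸ hk))
        rw [hγβ]
        exact le_trans (hinv.2 S) (theta_step hij hlt rfl (fun m => by split_ifs <;> omega))


lemma isKey_master {α : Fin n → ℕ} {f : MvPolynomial (Fin n) ℤ} (hf : IsKey n α f) :
    coeff (mexp α) f = 1 ∧ ∀ β : Fin n → ℕ, coeff (mexp β) f ≠ 0 → Inv α β := by
  induction hf with
  | decreasing α h =>
    have hmono : (∏ i, X i ^ α i : MvPolynomial (Fin n) ℤ) = monomial (mexp α) 1 := by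
      rw [monomial_eq, C_1, one_mul, Finsupp.prod_fintype]
      · rfl
      · intro i; rw [pow_zero]
    constructor
    · rw [hmono, coeff_monomial, if_pos rfl]
    · intro β hβ
      rw [hmono, coeff_monomial] at hβ
      by_cases hc : mexp α = mexp β
      · rw [← mexp_inj hc]
        exact inv_self α
      · rw [if_neg hc] at hβ
        exact absurd rfl hβ
  | step α i j hij h f hf ih =>
    have hij' : i ≠ j := fun e => by rw [e] at hij; omega
    have hd := demazure_as_sum (f := f) hij'
    set d₀ : Fin n →₀ ℕ := mexp (α ∘ Equiv.swap i j) with hd₀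
    have hcoeffd₀ : coeff d₀ f = 1 := ih.1
    have hd₀mem : d₀ ∈ f.support := by
      rw [mem_support_iff, hcoeffd₀]
      exact one_ne_zero
    constructor
    · rw [hd, MvPolynomial.coeff_sum]
      rw [Finset.sum_eq_single d₀]
      · have hcoe : (⇑d₀ : Fin n → ℕ) = α ∘ Equiv.swap i j := rfl
        rw [hcoe, dem1_coeff_delta hij' h, hcoeffd₀]
      · intro d hdm hdne
        by_contra hne0
        have hmr := dem1_coeff_ne hij' hne0
        have hinvd : Inv (α ∘ Equiv.swap i j) ⇑d :=
          ih.2 ⇑d (by rw [mexp_coe]; exact mem_support_iff.mp hdm)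
        have hdeq : (⇑d : Fin n → ℕ) = α ∘ Equiv.swap i j :=
          inv_unique_pre hij h hinvd (fun k hki hkj => (hmr.1 k hki hkj).symm)
            hmr.2.1.symm
        exact hdne (by rw [← mexp_coe d, hdeq])
      · intro hnm
        exact absurd hd₀mem hnm
    · intro γ hγ
      rw [hd, MvPolynomial.coeff_sum] at hγ
      obtain ⟨d, hdm, hne⟩ := Finset.exists_ne_zero_of_sum_ne_zero hγ
      have hmr := dem1_coeff_ne hij' hne
      have hinvd : Inv (α ∘ Equiv.swap i j) ⇑d :=
        ih.2 ⇑d (by rw [mexp_coe]; exact mem_support_iff.mp hdm)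
      exact inv_step hij h hinvd hmr.1 hmr.2.1 hmr.2.2.1 hmr.2.2.2

lemma isKey_exists (α : Fin n → ℕ) : ∃ f, IsKey n α f := by
  generalize hN : (∑ k, α k * (k : ℕ)) = N
  induction N using Nat.strong_induction_on generalizing α with
  | _ N IH =>
  by_cases hdec : ∀ p q : Fin n, (p : ℕ) + 1 = (q : ℕ) → α q ≤ α p
  · have hanti : ∀ p q : Fin n, p ≤ q → α q ≤ α p := by
      have key : ∀ d : ℕ, ∀ p q : Fin n, (q : ℕ) = (p : ℕ) + d → α q ≤ α p := by
        intro d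
        induction d with
        | zero =>
          intro p q hpq
          have : q = p := Fin.ext (by omega)
          rw [this]
        | succ d hd =>
          intro p q hpq
          have hmid : ((p : ℕ) + d) < n := by have := q.isLt; omega
          exact le_trans (hdec ⟨(p : ℕ) + d, hmid⟩ q (by simp; omega))
            (hd p ⟨(p : ℕ) + d, hmid⟩ rfl)
      intro p q hpq
      exact key ((q : ℕ) - (p : ℕ)) p q (by have := Fin.le_def.mp hpq; omega)
    exact ⟨_, IsKey.decreasing α hanti⟩
  · push_neg at hdec
    obtain ⟨p, q, hpq, hlt⟩ := hdec
    set α' := α ∘ Equiv.swap p q with hα'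
    have hp'q : p ≠ q := fun e => by rw [e] at hpq; omega
    have hmeas : ∑ k, α' k * (k : ℕ) < N := by
      rw [← hN]
      have hpu : p ∈ Finset.univ := Finset.mem_univ p
      have hqu : q ∈ Finset.univ.erase p :=
        Finset.mem_erase.mpr ⟨hp'q.symm, Finset.mem_univ q⟩
      rw [← Finset.add_sum_erase _ (fun k => α' k * (k : ℕ)) hpu,
        ← Finset.add_sum_erase _ (fun k => α k * (k : ℕ)) hpu,
        ← Finset.add_sum_erase _ (fun k => α' k * (k : ℕ)) hqu,
        ← Finset.add_sum_erase _ (fun k => α k * (k : ℕ)) hqu]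
      have hrest : ∑ k ∈ (Finset.univ.erase p).erase q, α' k * (k : ℕ)
          = ∑ k ∈ (Finset.univ.erase p).erase q, α k * (k : ℕ) := by
        refine Finset.sum_congr rfl (fun k hk => ?_)
        have hkq : k ≠ q := Finset.ne_of_mem_erase hk
        have hkp : k ≠ p := Finset.ne_of_mem_erase (Finset.mem_of_mem_erase hk)
        rw [hα']
        simp [Equiv.swap_apply_of_ne_of_ne hkp hkq]
      rw [hrest]
      have h1 : α' p = α q := by rw [hα']; simp [Equiv.swap_apply_left]
      have h2 : α' q = α p := by rw [hα']; simp [Equiv.swap_apply_right]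
      rw [h1, h2]
      have e1 : α q * (q : ℕ) = α q * (p : ℕ) + α q := by rw [← hpq, Nat.mul_succ]
      have e2 : α p * (q : ℕ) = α p * (p : ℕ) + α p := by rw [← hpq, Nat.mul_succ]
      omega
    obtain ⟨g, hg⟩ := IH _ hmeas α' rfl
    exact ⟨_, IsKey.step α p q hpq hlt g hg⟩

lemma isKey_keyPoly (α : Fin n → ℕ) : IsKey n α (keyPoly n α) := by
  rw [keyPoly, dif_pos (isKey_exists α)]
  exact (isKey_exists α).choose_spec

lemma keyPoly_coeff_self (α : Fin n → ℕ) : coeff (mexp α) (keyPoly n α) = 1 :=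
  (isKey_master (isKey_keyPoly α)).1

lemma keyPoly_coeff_ne {α β : Fin n → ℕ} (h : coeff (mexp β) (keyPoly n α) ≠ 0) :
    β = α ∨ RevLexLt n β α := by
  by_cases hba : β = α
  · exact Or.inl hba
  · exact Or.inr (inv_revlex ((isKey_master (isKey_keyPoly α)).2 β h) hba)


lemma revlex_irrefl (β : Fin n → ℕ) : ¬ RevLexLt n β β := by
  rintro ⟨i, _, hlt⟩
  omega

lemma revlex_trans {a b c : Fin n → ℕ} (h1 : RevLexLt n a b) (h2 : RevLexLt n b c) :
    RevLexLt n a c := by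
  obtain ⟨m1, he1, hl1⟩ := h1
  obtain ⟨m2, he2, hl2⟩ := h2
  rcases lt_trichotomy m1 m2 with h | h | h
  · exact ⟨m2, fun k hk => (he1 k (lt_trans h hk)).trans (he2 k hk),
      by rw [he1 m2 h]; exact hl2⟩
  · subst h
    exact ⟨m1, fun k hk => (he1 k hk).trans (he2 k hk), lt_trans hl1 hl2⟩
  · exact ⟨m1, fun k hk => (he1 k hk).trans (he2 k (lt_trans h hk)),
      by rw [← he2 m1 h]; exact hl1⟩

lemma revlex_total {a b : Fin n → ℕ} (h : a ≠ b) : RevLexLt n a b ∨ RevLexLt n b a := by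
  have hF : (Finset.univ.filter (fun k => a k ≠ b k)).Nonempty := by
    by_contra hc
    rw [Finset.not_nonempty_iff_eq_empty] at hc
    apply h
    funext k
    by_contra hk
    have : k ∈ Finset.univ.filter (fun k => a k ≠ b k) :=
      Finset.mem_filter.mpr ⟨Finset.mem_univ k, hk⟩
    rw [hc] at this
    exact absurd this (Finset.notMem_empty k)
  set m₀ := (Finset.univ.filter (fun k => a k ≠ b k)).max' hF with hm₀
  have hm₀mem : m₀ ∈ Finset.univ.filter (fun k => a k ≠ b k) := Finset.max'_mem _ hF
  have hm₀ne : a m₀ ≠ b m₀ := (Finset.mem_filter.mp hm₀mem).2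
  have hagree : ∀ k : Fin n, m₀ < k → a k = b k := by
    intro k hk
    by_contra hkne
    have : k ∈ Finset.univ.filter (fun k => a k ≠ b k) :=
      Finset.mem_filter.mpr ⟨Finset.mem_univ k, hkne⟩
    exact absurd hk (not_lt.mpr (Finset.le_max' _ k this))
  rcases lt_or_gt_of_ne hm₀ne with hlt | hgt
  · exact Or.inl ⟨m₀, hagree, hlt⟩
  · exact Or.inr ⟨m₀, fun k hk => (hagree k hk).symm, hgt⟩

lemma exists_revlex_max (F : Finset (Fin n → ℕ)) :
    F.Nonempty → ∃ μ ∈ F, ∀ β ∈ F, β ≠ μ → RevLexLt n β μ := by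
  induction F using Finset.induction_on with
  | empty => intro h; exact absurd h Finset.not_nonempty_empty
  | @insert a F hnm IH =>
    intro _
    by_cases hFe : F.Nonempty
    · obtain ⟨μ, hμF, hμmax⟩ := IH hFe
      by_cases haμ : a = μ
      · refine ⟨μ, Finset.mem_insert_of_mem hμF, fun β hβ hne => ?_⟩
        rcases Finset.mem_insert.mp hβ with h | h
        · exact absurd (h.trans haμ) hne
        · exact hμmax β h hne
      · rcases revlex_total haμ with hlt | hgt
        · refine ⟨μ, Finset.mem_insert_of_mem hμF, fun β hβ hne => ?_⟩
          rcases Finset.mem_insert.mp hβ with h | h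
          · rw [h]; exact hlt
          · exact hμmax β h hne
        · refine ⟨a, Finset.mem_insert_self a F, fun β hβ hne => ?_⟩
          rcases Finset.mem_insert.mp hβ with h | h
          · exact absurd h hne
          · by_cases hβμ : β = μ
            · rw [hβμ]; exact hgt
            · exact revlex_trans (hμmax β h hβμ) hgt
    · rw [Finset.not_nonempty_iff_eq_empty] at hFe
      subst hFe
      refine ⟨a, Finset.mem_insert_self a ∅, fun β hβ hne => ?_⟩
      rcases Finset.mem_insert.mp hβ with h | h
      · exact absurd h hne
      · exact absurd h (Finset.notMem_empty β)

lemma revlex_wf : WellFounded (RevLexLt n) := by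
  have hwf : WellFounded ((· < ·) : Lex ((Fin n)ᵒᵈ → ℕ) → Lex ((Fin n)ᵒᵈ → ℕ) → Prop) :=
    wellFounded_lt
  have hsub : ∀ {a b : Fin n → ℕ}, RevLexLt n a b →
      InvImage ((· < ·) : Lex ((Fin n)ᵒᵈ → ℕ) → Lex ((Fin n)ᵒᵈ → ℕ) → Prop)
        (fun x : Fin n → ℕ => toLex (x : (Fin n)ᵒᵈ → ℕ)) a b := by
    rintro a b ⟨i, he, hl⟩
    exact ⟨i, fun j hj => he j hj, hl⟩
  exact Subrelation.wf hsub
    (InvImage.wf (fun x : Fin n → ℕ => toLex (x : (Fin n)ᵒᵈ → ℕ)) hwf)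

lemma sum_repr_zero {d : (Fin n → ℕ) →₀ ℤ}
    (h : (d.sum fun α z => z • keyPoly n α) = 0) : d = 0 := by
  by_contra hd
  have hsupp : d.support.Nonempty := Finsupp.support_nonempty_iff.mpr hd
  obtain ⟨μ, hμF, hμmax⟩ := exists_revlex_max d.support hsupp
  have hc := congrArg (coeff (mexp μ)) h
  rw [Finsupp.sum, MvPolynomial.coeff_sum, coeff_zero] at hc
  rw [Finset.sum_eq_single μ] at hc
  · rw [coeff_smul, keyPoly_coeff_self, smul_eq_mul, mul_one] at hc
    exact (Finsupp.mem_support_iff.mp hμF) hc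
  · intro α hα hne
    rw [coeff_smul]
    by_cases hz : coeff (mexp μ) (keyPoly n α) = 0
    · rw [hz, smul_zero]
    · rcases keyPoly_coeff_ne hz with he | hlt
      · exact absurd he.symm hne
      · exact (revlex_irrefl μ (revlex_trans hlt (hμmax α hα hne))).elim
  · intro hnm
    exact (hnm hμF).elim

lemma exists_repr_bounded (μ : Fin n → ℕ) : ∀ g : MvPolynomial (Fin n) ℤ,
    (∀ β, coeff (mexp β) g ≠ 0 → β = μ ∨ RevLexLt n β μ) →
    ∃ c : (Fin n → ℕ) →₀ ℤ, g = c.sum fun α z => z • keyPoly n α := by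
  refine revlex_wf.induction (C := fun μ => ∀ g : MvPolynomial (Fin n) ℤ,
    (∀ β, coeff (mexp β) g ≠ 0 → β = μ ∨ RevLexLt n β μ) →
    ∃ c : (Fin n → ℕ) →₀ ℤ, g = c.sum fun α z => z • keyPoly n α) μ ?_
  clear μ
  intro μ IH g hg
  set z := coeff (mexp μ) g with hz
  set g' := g - z • keyPoly n μ with hg'
  have hg'μ : coeff (mexp μ) g' = 0 := by
    rw [hg', coeff_sub, coeff_smul, keyPoly_coeff_self, smul_eq_mul, mul_one, ← hz,
      sub_self]
  have hbd : ∀ β, coeff (mexp β) g' ≠ 0 → RevLexLt n β μ := by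
    intro β hβ
    have hβμ : β ≠ μ := fun he => hβ (he ▸ hg'μ)
    have hor : coeff (mexp β) g ≠ 0 ∨ coeff (mexp β) (keyPoly n μ) ≠ 0 := by
      by_contra hc
      push_neg at hc
      apply hβ
      rw [hg', coeff_sub, coeff_smul, hc.1, hc.2, smul_zero, sub_zero]
    rcases hor with h | h
    · rcases hg β h with he | hl
      · exact absurd he hβμ
      · exact hl
    · rcases keyPoly_coeff_ne h with he | hl
      · exact absurd he hβμ
      · exact hl
  by_cases hg'0 : g' = 0
  · refine ⟨Finsupp.single μ z, ?_⟩
    rw [Finsupp.sum_single_index (by rw [zero_smul])]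
    rw [← sub_eq_zero, ← hg']
    exact hg'0
  · have hsupp : g'.support.Nonempty :=
      Finset.nonempty_iff_ne_empty.mpr (fun he => hg'0 (support_eq_empty.mp he))
    obtain ⟨ν, hνF, hνmax⟩ :=
      exists_revlex_max (g'.support.image (fun d : Fin n →₀ ℕ => ⇑d))
        (hsupp.image _)
    obtain ⟨dν, hdν, hdνeq⟩ := Finset.mem_image.mp hνF
    have hνcoeff : coeff (mexp ν) g' ≠ 0 := by
      rw [← hdνeq, mexp_coe]
      exact mem_support_iff.mp hdν
    have hνμ : RevLexLt n ν μ := hbd ν hνcoeff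
    have hg'bd : ∀ β, coeff (mexp β) g' ≠ 0 → β = ν ∨ RevLexLt n β ν := by
      intro β hβ
      by_cases hβν : β = ν
      · exact Or.inl hβν
      · refine Or.inr (hνmax β ?_ hβν)
        exact Finset.mem_image.mpr ⟨mexp β, mem_support_iff.mpr hβ, rfl⟩
    obtain ⟨c', hc'⟩ := IH ν hνμ g' hg'bd
    refine ⟨c' + Finsupp.single μ z, ?_⟩
    rw [Finsupp.sum_add_index' (fun a => by rw [zero_smul])
      (fun a z1 z2 => by rw [add_smul])]
    rw [← hc', Finsupp.sum_single_index (by rw [zero_smul]), hg']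
    ring

lemma exists_repr (g : MvPolynomial (Fin n) ℤ) :
    ∃ c : (Fin n → ℕ) →₀ ℤ, g = c.sum fun α z => z • keyPoly n α := by
  by_cases hg : g = 0
  · exact ⟨0, by rw [Finsupp.sum_zero_index, hg]⟩
  · have hsupp : g.support.Nonempty :=
      Finset.nonempty_iff_ne_empty.mpr (fun he => hg (support_eq_empty.mp he))
    obtain ⟨μ, hμF, hμmax⟩ :=
      exists_revlex_max (g.support.image (fun d : Fin n →₀ ℕ => ⇑d)) (hsupp.image _)
    refine exists_repr_bounded μ g (fun β hβ => ?_)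
    by_cases hβμ : β = μ
    · exact Or.inl hβμ
    · refine Or.inr (hμmax β ?_ hβμ)
      exact Finset.mem_image.mpr ⟨mexp β, mem_support_iff.mpr hβ, rfl⟩

end KeyProof

/-- the leading monomial of κ_α with respect to the pure reverse
lexicographic order is x^α with coefficient 1, and consequently the key polynomials
form a ℤ-basis of ℤ[x_1,...,x_n]: every polynomial is a unique finite ℤ-linear
combination of the κ_α. -/
theorem key_leading_term_and_basis (n : ℕ) :
    (∀ α : Fin n → ℕ,
      coeff (Finsupp.equivFunOnFinite.symm α) (keyPoly n α) = 1 ∧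
      ∀ β : Fin n → ℕ,
        coeff (Finsupp.equivFunOnFinite.symm β) (keyPoly n α) ≠ 0 →
          β = α ∨ RevLexLt n β α) ∧
    (∀ g : MvPolynomial (Fin n) ℤ,
      ∃! c : (Fin n → ℕ) →₀ ℤ, g = c.sum fun α z => z • keyPoly n α) := by

  constructor
  · intro α
    exact ⟨KeyProof.keyPoly_coeff_self α, fun β h => KeyProof.keyPoly_coeff_ne h⟩
  · intro g
    obtain ⟨c, hc⟩ := KeyProof.exists_repr g
    refine ⟨c, hc, ?_⟩
    intro c' hc'
    have hdiff : ((c' - c).sum fun α z => z • keyPoly n α) = 0 := by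
      rw [Finsupp.sum_sub_index (fun a b1 b2 => by rw [sub_smul])]
      rw [← hc, ← hc', sub_self]
    exact sub_eq_zero.mp (KeyProof.sum_repr_zero hdiff)
end

section
/- For any permutation w in S_n, the lowest-degree homogeneous component of the Grothendieck polynomial 𝔊_w is the Schubert polynomial 𝔖_w; that is, 𝔊_w = 𝔖_w + (terms of degree strictly greater than ℓ(w)). -/
open MvPolynomial Classical

/-- The isobaric divided difference π_i(f) = ∂_i((1 - x_{i+1})f). -/
noncomputable def isobaric (n : ℕ) (i j : Fin n) (f : MvPolynomial (Fin n) ℤ) :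
    MvPolynomial (Fin n) ℤ :=
  ddiff n i j ((1 - X j) * f)

/-- `IsSchubert n w f` holds iff f is the Schubert polynomial 𝔖_w:
𝔖_{w_0} = x_1^{n-1}x_2^{n-2}···x_{n-1} for the longest element w_0, and
𝔖_w = ∂_i(𝔖_{w s_i}) whenever w(i) < w(i+1). -/
inductive IsSchubert (n : ℕ) : Equiv.Perm (Fin n) → MvPolynomial (Fin n) ℤ → Prop where
  | w0 : IsSchubert n (Fin.revPerm) (∏ i : Fin n, X i ^ (n - 1 - (i : ℕ)))
  | step (w : Equiv.Perm (Fin n)) (i j : Fin n) (hij : (i : ℕ) + 1 = (j : ℕ))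
      (hasc : w i < w j) (f : MvPolynomial (Fin n) ℤ)
      (hf : IsSchubert n (w * Equiv.swap i j) f) :
      IsSchubert n w (ddiff n i j f)

/-- `IsGroth n w f` holds iff f is the Grothendieck polynomial 𝔊_w:
𝔊_{w_0} = x_1^{n-1}x_2^{n-2}···x_{n-1}, and 𝔊_w = π_i(𝔊_{w s_i}) whenever
w(i) < w(i+1), where π_i(f) = ∂_i((1-x_{i+1})f). -/
inductive IsGroth (n : ℕ) : Equiv.Perm (Fin n) → MvPolynomial (Fin n) ℤ → Prop where
  | w0 : IsGroth n (Fin.revPerm) (∏ i : Fin n, X i ^ (n - 1 - (i : ℕ)))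
  | step (w : Equiv.Perm (Fin n)) (i j : Fin n) (hij : (i : ℕ) + 1 = (j : ℕ))
      (hasc : w i < w j) (f : MvPolynomial (Fin n) ℤ)
      (hf : IsGroth n (w * Equiv.swap i j) f) :
      IsGroth n w (isobaric n i j f)

/-- The Coxeter length ℓ(w): the number of inversions of w. -/
def permLength (n : ℕ) (w : Equiv.Perm (Fin n)) : ℕ :=
  (Finset.univ.filter fun p : Fin n × Fin n => p.1 < p.2 ∧ w p.2 < w p.1).card

open Equiv Finsupp


lemma dvd_sub_rename_swap (n : ℕ) (i j : Fin n) (f : MvPolynomial (Fin n) ℤ) :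
    (X i - X j : MvPolynomial (Fin n) ℤ) ∣ (f - rename (Equiv.swap i j) f) := by
  induction f using MvPolynomial.induction_on with
  | C a => simp
  | add p q hp hq =>
      rw [map_add]
      have h := dvd_add hp hq
      convert h using 1; ring
  | mul_X p k hp =>
      rw [map_mul, rename_X]
      have key : p * X k - rename (Equiv.swap i j) p * X (Equiv.swap i j k)
          = (p - rename (Equiv.swap i j) p) * X k
            + rename (Equiv.swap i j) p * (X k - X (Equiv.swap i j k)) := by ring
      rw [key]
      refine dvd_add (hp.mul_right _) (Dvd.dvd.mul_left ?_ _)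
      rcases eq_or_ne k i with hki | hki
      · rw [hki, Equiv.swap_apply_left]
      rcases eq_or_ne k j with hkj | hkj
      · rw [hkj, Equiv.swap_apply_right,
          show (X j - X i : MvPolynomial (Fin n) ℤ) = -(X i - X j) by ring]
        exact dvd_neg.mpr dvd_rfl
      · rw [Equiv.swap_apply_of_ne_of_ne hki hkj]; simp

lemma ddiff_spec (n : ℕ) (i j : Fin n) (f : MvPolynomial (Fin n) ℤ) :
    (X i - X j : MvPolynomial (Fin n) ℤ) * ddiff n i j f
      = f - rename (Equiv.swap i j) f := by
  rw [ddiff, dif_pos (dvd_sub_rename_swap n i j f)]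
  exact ((dvd_sub_rename_swap n i j f).choose_spec).symm

lemma X_sub_X_ne {n : ℕ} {i j : Fin n} (h : i ≠ j) :
    (X i - X j : MvPolynomial (Fin n) ℤ) ≠ 0 :=
  sub_ne_zero_of_ne fun hX => h (MvPolynomial.X_injective hX)

lemma ddiff_unique {n : ℕ} {i j : Fin n} (h : i ≠ j) {f g : MvPolynomial (Fin n) ℤ}
    (hg : (X i - X j : MvPolynomial (Fin n) ℤ) * g = f - rename (Equiv.swap i j) f) :
    ddiff n i j f = g :=
  mul_left_cancel₀ (X_sub_X_ne h) ((ddiff_spec n i j f).trans hg.symm)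


lemma degree_mapDomain_equiv {α β : Type*} (e : α ≃ β) (m : α →₀ ℕ) :
    (Finsupp.mapDomain e m).degree = m.degree := by
  classical
  rw [← Finsupp.equivMapDomain_eq_mapDomain]
  simp [Finsupp.degree_apply, Finsupp.equivMapDomain, Finset.sum_map]

lemma coeff_rename_equiv {α β : Type*} [DecidableEq α] [DecidableEq β] (e : α ≃ β)
    (p : MvPolynomial α ℤ) (m : β →₀ ℕ) :
    coeff m (rename e p) = coeff (Finsupp.mapDomain e.symm m) p := by
  conv_lhs => rw [show m = Finsupp.mapDomain e (Finsupp.mapDomain e.symm m) by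
    rw [← Finsupp.mapDomain_comp]; simp [Finsupp.mapDomain_id]]
  exact coeff_rename_mapDomain e e.injective p _

lemma hcomp_rename {n : ℕ} (e : Equiv.Perm (Fin n)) (f : MvPolynomial (Fin n) ℤ) (d : ℕ) :
    homogeneousComponent d (rename e f) = rename e (homogeneousComponent d f) := by
  classical
  ext m
  rw [coeff_homogeneousComponent, coeff_rename_equiv, coeff_rename_equiv,
    coeff_homogeneousComponent, degree_mapDomain_equiv]

lemma hcomp_mul_one {n : ℕ} {φ : MvPolynomial (Fin n) ℤ} (hφ : φ.IsHomogeneous 1)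
    (p : MvPolynomial (Fin n) ℤ) (d : ℕ) :
    homogeneousComponent (d + 1) (φ * p) = φ * homogeneousComponent d p := by
  classical
  conv_lhs => rw [show φ * p = ∑ e ∈ Finset.range (p.totalDegree + 1),
      φ * homogeneousComponent e p by rw [← Finset.mul_sum, sum_homogeneousComponent]]
  rw [map_sum]
  have hcong : ∀ e ∈ Finset.range (p.totalDegree + 1),
      homogeneousComponent (d + 1) (φ * homogeneousComponent e p)
        = if d = e then φ * homogeneousComponent e p else 0 := by
    intro e _
    have hmem : φ * homogeneousComponent e p ∈ homogeneousSubmodule (Fin n) ℤ (1 + e) :=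
      (mem_homogeneousSubmodule _ _).2 (hφ.mul (homogeneousComponent_isHomogeneous e p))
    rw [homogeneousComponent_of_mem hmem]
    exact if_congr (by omega) rfl rfl
  rw [Finset.sum_congr rfl hcong, Finset.sum_ite_eq]
  split_ifs with hd
  · rfl
  · rw [Finset.mem_range, not_lt] at hd
    rw [homogeneousComponent_eq_zero _ _ (by omega), mul_zero]

lemma hcomp_mul_zero {n : ℕ} {φ : MvPolynomial (Fin n) ℤ} (hφ : φ.IsHomogeneous 1)
    (p : MvPolynomial (Fin n) ℤ) :
    homogeneousComponent 0 (φ * p) = 0 := by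
  rw [homogeneousComponent_zero]
  have h0 : coeff 0 φ = 0 :=
    hφ.coeff_eq_zero (by simp [map_zero])
  have : coeff 0 (φ * p) = 0 := by
    rw [← constantCoeff_eq, map_mul, constantCoeff_eq, h0, zero_mul]
  rw [this, map_zero]

lemma hcomp_cancel {n : ℕ} {i j : Fin n} (h : i ≠ j) {g p : MvPolynomial (Fin n) ℤ}
    (hg : (X i - X j : MvPolynomial (Fin n) ℤ) * g = p) {m : ℕ}
    (hp : ∀ e, e ≤ m + 1 → homogeneousComponent e p = 0) :
    ∀ d, d ≤ m → homogeneousComponent d g = 0 := by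
  intro d hd
  have hφ : (X i - X j : MvPolynomial (Fin n) ℤ).IsHomogeneous 1 :=
    (isHomogeneous_X _ _).sub (isHomogeneous_X _ _)
  have := hcomp_mul_one hφ g d
  rw [hg, hp (d + 1) (by omega)] at this
  rcases mul_eq_zero.1 this.symm with h0 | h0
  · exact absurd h0 (by exact fun hh => (sub_ne_zero_of_ne
      fun hX => h (MvPolynomial.X_injective hX)) hh)
  · exact h0



lemma swap_adj_lt {n : ℕ} {i j p1 p2 : Fin n} (hij : (i : ℕ) + 1 = (j : ℕ))
    (h12 : p1 < p2) (hne : ¬(p1 = i ∧ p2 = j)) :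
    Equiv.swap i j p1 < Equiv.swap i j p2 := by
  have hij' : i < j := by rw [Fin.lt_def]; omega
  by_cases h1i : p1 = i
  · have h2j : p2 ≠ j := fun h => hne ⟨h1i, h⟩
    have h2i : p2 ≠ i := h1i ▸ (ne_of_gt h12)
    rw [h1i, Equiv.swap_apply_left, Equiv.swap_apply_of_ne_of_ne h2i h2j]
    have e1 : (p1 : ℕ) = i := congrArg Fin.val h1i
    have e2 : (p2 : ℕ) ≠ (j : ℕ) := Fin.val_ne_of_ne h2j
    rw [Fin.lt_def] at h12 ⊢
    omega
  · by_cases h1j : p1 = j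
    · have hj2 : j < p2 := h1j ▸ h12
      have h2i : p2 ≠ i := ne_of_gt (lt_trans hij' hj2)
      have h2j : p2 ≠ j := ne_of_gt hj2
      rw [h1j, Equiv.swap_apply_right, Equiv.swap_apply_of_ne_of_ne h2i h2j]
      exact lt_trans hij' hj2
    · rw [Equiv.swap_apply_of_ne_of_ne h1i h1j]
      by_cases h2i : p2 = i
      · have h12' : p1 < i := h2i ▸ h12
        rw [h2i, Equiv.swap_apply_left]
        exact lt_trans h12' hij'
      · by_cases h2j : p2 = j
        · rw [h2j, Equiv.swap_apply_right]
          have e1 : (p1 : ℕ) ≠ (i : ℕ) := Fin.val_ne_of_ne h1i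
          have e2 : (p1 : ℕ) < (p2 : ℕ) := h12
          have e3 : (p2 : ℕ) = (j : ℕ) := congrArg Fin.val h2j
          rw [Fin.lt_def]
          omega
        · rw [Equiv.swap_apply_of_ne_of_ne h2i h2j]; exact h12

lemma permLength_mul_swap {n : ℕ} {w : Equiv.Perm (Fin n)} {i j : Fin n}
    (hij : (i : ℕ) + 1 = (j : ℕ)) (hasc : w i < w j) :
    permLength n (w * Equiv.swap i j) = permLength n w + 1 := by
  classical
  have hij' : i < j := by rw [Fin.lt_def]; omega
  set τ := Equiv.swap i j with hτ
  set A := Finset.univ.filter fun p : Fin n × Fin n => p.1 < p.2 ∧ w p.2 < w p.1 with hA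
  set A' := Finset.univ.filter
    fun p : Fin n × Fin n => p.1 < p.2 ∧ (w * τ) p.2 < (w * τ) p.1 with hA'
  have key : A' = insert (i, j) (A.image fun p => (τ p.1, τ p.2)) := by
    ext ⟨p1, p2⟩
    simp only [hA, hA', Finset.mem_filter]
    simp only [hA, hA', Finset.mem_insert, Finset.mem_image, Finset.mem_filter,
      Finset.mem_univ, true_and, Prod.mk.injEq, Equiv.Perm.mul_apply, Prod.exists]
    constructor
    · rintro ⟨h12, hinv⟩
      by_cases hp : p1 = i ∧ p2 = j
      · exact Or.inl ⟨hp.1, hp.2⟩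
      · refine Or.inr ⟨τ p1, τ p2, ⟨⟨swap_adj_lt hij h12 hp, ?_⟩, ?_, ?_⟩⟩
        · simpa [hτ, Equiv.swap_apply_self] using hinv
        · simp [hτ, Equiv.swap_apply_self]
        · simp [hτ, Equiv.swap_apply_self]
    · rintro (⟨rfl, rfl⟩ | ⟨q1, q2, ⟨hq12, hqinv⟩, he1, he2⟩)
      · refine ⟨hij', ?_⟩
        simpa [hτ, Equiv.swap_apply_left, Equiv.swap_apply_right] using hasc
      · subst he1; subst he2
        have hqne : ¬(q1 = i ∧ q2 = j) := by
          rintro ⟨rfl, rfl⟩; exact absurd hqinv (not_lt.2 (le_of_lt hasc))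
        refine ⟨swap_adj_lt hij hq12 hqne, ?_⟩
        simpa [hτ, Equiv.swap_apply_self] using hqinv
  have hnotmem : (i, j) ∉ A.image fun p => (τ p.1, τ p.2) := by
    intro hmem
    obtain ⟨⟨q1, q2⟩, hq, he⟩ := Finset.mem_image.1 hmem
    rw [Prod.mk.injEq] at he
    have hq1 : q1 = j := by
      have := congrArg τ he.1
      simpa [hτ, Equiv.swap_apply_self, Equiv.swap_apply_left] using this
    have hq2 : q2 = i := by
      have := congrArg τ he.2
      simpa [hτ, Equiv.swap_apply_self, Equiv.swap_apply_right] using this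
    rw [hA, Finset.mem_filter] at hq
    rw [hq1, hq2] at hq
    exact absurd hq.2.1 (not_lt.2 (le_of_lt hij'))
  have hinj : Function.Injective fun p : Fin n × Fin n => (τ p.1, τ p.2) := by
    intro a b hab
    rw [Prod.mk.injEq] at hab
    exact Prod.ext (τ.injective hab.1) (τ.injective hab.2)
  rw [permLength, permLength, ← hA', ← hA, key, Finset.card_insert_of_notMem hnotmem,
    Finset.card_image_of_injective _ hinj, add_comm]

lemma permLength_le (n : ℕ) (w : Equiv.Perm (Fin n)) : permLength n w ≤ n * n := by
  refine le_trans (Finset.card_filter_le _ _) ?_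
  simp [Finset.card_univ]

lemma permLength_revPerm_le (n : ℕ) :
    permLength n Fin.revPerm ≤ ∑ i : Fin n, (n - 1 - (i : ℕ)) := by
  classical
  have h1 : permLength n Fin.revPerm
      ≤ (Finset.univ.sigma fun a : Fin n => Finset.Ioi a).card := by
    rw [permLength]
    refine Finset.card_le_card_of_injOn
      (fun p : Fin n × Fin n => (⟨p.1, p.2⟩ : Σ _ : Fin n, Fin n)) ?_ ?_
    · intro p hp
      rw [Finset.mem_coe, Finset.mem_filter] at hp
      rw [Finset.mem_coe, Finset.mem_sigma]
      exact ⟨Finset.mem_univ _, Finset.mem_Ioi.2 hp.2.1⟩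
    · intro a _ b _ hab
      obtain ⟨a1, a2⟩ := a; obtain ⟨b1, b2⟩ := b
      simpa using hab
  refine le_trans h1 ?_
  rw [Finset.card_sigma]
  refine le_of_eq (Finset.sum_congr rfl fun a _ => ?_)
  rw [Fin.card_Ioi]

lemma eq_revPerm_of_no_ascent {n : ℕ} (w : Equiv.Perm (Fin n))
    (h : ∀ i j : Fin n, (i : ℕ) + 1 = (j : ℕ) → ¬ w i < w j) : w = Fin.revPerm := by
  set g : Fin n → Fin n := fun k => w (Fin.rev k) with hg
  have hadj : ∀ a b : Fin n, (a : ℕ) + 1 = (b : ℕ) → g a < g b := by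
    intro a b hab
    have hrev : (Fin.rev b : ℕ) + 1 = (Fin.rev a : ℕ) := by
      rw [Fin.val_rev, Fin.val_rev]; omega
    have hne : g a ≠ g b := by
      intro he
      have h2 : Fin.rev a = Fin.rev b := w.injective he
      have := congrArg Fin.val h2
      rw [Fin.val_rev, Fin.val_rev] at this
      omega
    exact lt_of_le_of_ne (not_lt.1 (h (Fin.rev b) (Fin.rev a) hrev)) hne
  have hmono : StrictMono g := by
    intro a b hab
    obtain ⟨d, hd⟩ : ∃ d : ℕ, (b : ℕ) = (a : ℕ) + (d + 1) :=
      ⟨(b : ℕ) - (a : ℕ) - 1, by have := Fin.lt_def.1 hab; omega⟩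
    clear hab
    induction d generalizing b with
    | zero => exact hadj a b (by omega)
    | succ d ih =>
        have hblt : (a : ℕ) + (d + 1) < n := by have := b.isLt; omega
        set c : Fin n := ⟨(a : ℕ) + (d + 1), hblt⟩ with hc
        have hcb : (c : ℕ) + 1 = (b : ℕ) := by simp [hc]; omega
        exact lt_trans (ih (b := c) rfl) (hadj c b hcb)
  haveI : WellFoundedLT (Fin n) := inferInstance
  have hginv : ∀ k, g k = k := by
    intro k
    set hfun : Fin n → Fin n := fun k => Fin.rev (w.symm k) with hh
    have hgh : ∀ k, g (hfun k) = k := by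
      intro k; simp [hg, hh, Fin.rev_rev]
    have hhg : ∀ k, hfun (g k) = k := by
      intro k; simp [hg, hh, Fin.rev_rev]
    have hhmono : StrictMono hfun := by
      intro a b hab
      rcases lt_trichotomy (hfun a) (hfun b) with hlt | heq | hgt
      · exact hlt
      · exact absurd (by rw [← hgh a, ← hgh b, heq]) (ne_of_lt hab)
      · have := hmono hgt
        rw [hgh a, hgh b] at this
        exact absurd hab (not_lt.2 (le_of_lt this))
    have h1 : g k ≤ k := by
      have h2 : g k ≤ hfun (g k) := StrictMono.le_apply hhmono
      rwa [hhg k] at h2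
    exact le_antisymm h1 (StrictMono.le_apply hmono)
  ext x
  have := hginv (Fin.rev x)
  simp only [hg, Fin.rev_rev] at this
  simp [this, Fin.revPerm_apply]

lemma rename_mul {n : ℕ} (a b : Equiv.Perm (Fin n)) (f : MvPolynomial (Fin n) ℤ) :
    rename ⇑a (rename ⇑b f) = rename ⇑(a * b) f := by
  rw [rename_rename, Equiv.Perm.coe_mul]

lemma rename_swap_swap {n : ℕ} (i j : Fin n) (f : MvPolynomial (Fin n) ℤ) :
    rename ⇑(Equiv.swap i j) (rename ⇑(Equiv.swap i j) f) = f := by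
  rw [rename_mul, Equiv.swap_mul_self, Equiv.Perm.coe_one, rename_id, AlgHom.id_apply]

lemma ddiff_flip {n : ℕ} {i j : Fin n} (h : i ≠ j) (f : MvPolynomial (Fin n) ℤ) :
    ddiff n j i f = - ddiff n i j f := by
  refine ddiff_unique h.symm ?_
  rw [Equiv.swap_comm j i]
  linear_combination ddiff_spec n i j f

lemma ddiff_neg {n : ℕ} {i j : Fin n} (h : i ≠ j) (f : MvPolynomial (Fin n) ℤ) :
    ddiff n i j (-f) = - ddiff n i j f := by
  refine ddiff_unique h ?_
  rw [map_neg]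
  linear_combination - ddiff_spec n i j f

lemma swap_disjoint_comm {α : Type*} [DecidableEq α] {i j k l : α}
    (hik : i ≠ k) (hil : i ≠ l) (hjk : j ≠ k) (hjl : j ≠ l) :
    Equiv.swap i j * Equiv.swap k l = Equiv.swap k l * Equiv.swap i j := by
  ext x
  simp only [Equiv.Perm.mul_apply, Equiv.swap_apply_def]
  split_ifs <;> simp_all

lemma swap_braid {α : Type*} [DecidableEq α] {i j k : α}
    (hij : i ≠ j) (hjk : j ≠ k) (hik : i ≠ k) :
    Equiv.swap i j * Equiv.swap j k * Equiv.swap i j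
      = Equiv.swap j k * Equiv.swap i j * Equiv.swap j k := by
  have h1 : Equiv.swap j i * Equiv.swap k j * Equiv.swap j i = Equiv.swap i k :=
    Equiv.swap_mul_swap_mul_swap hjk.symm (by exact hik.symm) -- x=k,y=j,z=i : swap z x = swap i k
  have h2 : Equiv.swap j k * Equiv.swap i j * Equiv.swap j k = Equiv.swap k i :=
    Equiv.swap_mul_swap_mul_swap hij hik
  rw [Equiv.swap_comm j i, Equiv.swap_comm k j] at h1
  rw [h1, h2, Equiv.swap_comm]

lemma ddiff_comm {n : ℕ} {i j k l : Fin n} (hij : i ≠ j) (hkl : k ≠ l)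
    (hik : i ≠ k) (hil : i ≠ l) (hjk : j ≠ k) (hjl : j ≠ l)
    (f : MvPolynomial (Fin n) ℤ) :
    ddiff n i j (ddiff n k l f) = ddiff n k l (ddiff n i j f) := by
  set a := Equiv.swap i j with ha
  set b := Equiv.swap k l with hb
  set d1 := ddiff n k l f with hd1
  set e1 := ddiff n i j f with he1d
  set d2 := ddiff n i j d1 with hd2
  have h1 : (X k - X l : MvPolynomial (Fin n) ℤ) * d1 = f - rename ⇑b f := ddiff_spec n k l f
  have h2 : (X i - X j : MvPolynomial (Fin n) ℤ) * d2 = d1 - rename ⇑a d1 := ddiff_spec n i j d1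
  have he1 : (X i - X j : MvPolynomial (Fin n) ℤ) * e1 = f - rename ⇑a f := ddiff_spec n i j f
  have hak : a k = k := Equiv.swap_apply_of_ne_of_ne hik.symm hjk.symm
  have hal : a l = l := Equiv.swap_apply_of_ne_of_ne hil.symm hjl.symm
  have hbi : b i = i := Equiv.swap_apply_of_ne_of_ne hik hil
  have hbj : b j = j := Equiv.swap_apply_of_ne_of_ne hjk hjl
  have ha1 := congrArg (rename ⇑a) h1
  simp only [map_mul, map_sub, rename_X, hak, hal] at ha1
  have hbe1 := congrArg (rename ⇑b) he1
  simp only [map_mul, map_sub, rename_X, hbi, hbj] at hbe1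
  have hab : rename ⇑a (rename ⇑b f) = rename ⇑b (rename ⇑a f) := by
    rw [rename_mul, rename_mul, swap_disjoint_comm hik hil hjk hjl]
  refine (ddiff_unique hkl ?_).symm
  refine mul_left_cancel₀ (X_sub_X_ne hij) ?_
  linear_combination (X k - X l : MvPolynomial (Fin n) ℤ) * h2 + h1 - ha1 - he1 + hbe1 + hab

lemma ddiff_braid_key {n : ℕ} {i j k : Fin n} (hij : i ≠ j) (hjk : j ≠ k) (hik : i ≠ k)
    (f : MvPolynomial (Fin n) ℤ) :
    (X i - X j : MvPolynomial (Fin n) ℤ) * ((X i - X k) * ((X j - X k)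
        * ddiff n i j (ddiff n j k (ddiff n i j f))))
      = f - rename ⇑(Equiv.swap i j) f - rename ⇑(Equiv.swap j k) f
        + rename ⇑(Equiv.swap i j) (rename ⇑(Equiv.swap j k) f)
        + rename ⇑(Equiv.swap j k) (rename ⇑(Equiv.swap i j) f)
        - rename ⇑(Equiv.swap i j) (rename ⇑(Equiv.swap j k) (rename ⇑(Equiv.swap i j) f)) := by
  set a := Equiv.swap i j with ha
  set b := Equiv.swap j k with hb
  set d1 := ddiff n i j f with hd1
  set d2 := ddiff n j k d1 with hd2
  set d3 := ddiff n i j d2 with hd3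
  have h1 : (X i - X j : MvPolynomial (Fin n) ℤ) * d1 = f - rename ⇑a f := ddiff_spec n i j f
  have h2 : (X j - X k : MvPolynomial (Fin n) ℤ) * d2 = d1 - rename ⇑b d1 := ddiff_spec n j k d1
  have h3 : (X i - X j : MvPolynomial (Fin n) ℤ) * d3 = d2 - rename ⇑a d2 := ddiff_spec n i j d2
  have hai : a i = j := Equiv.swap_apply_left i j
  have haj : a j = i := Equiv.swap_apply_right i j
  have hak : a k = k := Equiv.swap_apply_of_ne_of_ne hik.symm hjk.symm
  have hbi : b i = i := Equiv.swap_apply_of_ne_of_ne hij hik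
  have hbj : b j = k := Equiv.swap_apply_left j k
  have h1a := congrArg (rename ⇑a) h1
  simp only [map_mul, map_sub, rename_X, hai, haj] at h1a
  rw [show (rename ⇑a) ((rename ⇑a) f) = f by rw [ha]; exact rename_swap_swap i j f] at h1a
  have had1 : rename ⇑a d1 = d1 :=
    mul_left_cancel₀ (X_sub_X_ne hij) (by linear_combination - h1a - h1)
  have ha2 := congrArg (rename ⇑a) h2
  simp only [map_mul, map_sub, rename_X, haj, hak] at ha2
  rw [had1] at ha2
  have hb1 := congrArg (rename ⇑b) h1
  simp only [map_mul, map_sub, rename_X, hbi, hbj] at hb1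
  have hab1 := congrArg (rename ⇑a) hb1
  simp only [map_mul, map_sub, rename_X, hai, hak] at hab1
  linear_combination (X i - X k : MvPolynomial (Fin n) ℤ) * (X j - X k) * h3
    + (X i - X k : MvPolynomial (Fin n) ℤ) * h2
    - (X j - X k : MvPolynomial (Fin n) ℤ) * ha2
    + h1 - hb1 + hab1

lemma ddiff_braid {n : ℕ} {i j k : Fin n} (hij : i ≠ j) (hjk : j ≠ k) (hik : i ≠ k)
    (f : MvPolynomial (Fin n) ℤ) :
    ddiff n i j (ddiff n j k (ddiff n i j f))
      = ddiff n j k (ddiff n i j (ddiff n j k f)) := by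
  have k1 := ddiff_braid_key hij hjk hik f
  have k2 := ddiff_braid_key (i := k) (j := j) (k := i) hjk.symm hij.symm hik.symm f
  rw [Equiv.swap_comm k j, Equiv.swap_comm j i] at k2
  rw [ddiff_flip hjk f, ddiff_neg hij.symm, ddiff_flip hij (ddiff n j k f), neg_neg,
    ddiff_flip hjk (ddiff n i j (ddiff n j k f))] at k2
  have hterm : rename ⇑(Equiv.swap i j) (rename ⇑(Equiv.swap j k) (rename ⇑(Equiv.swap i j) f))
      = rename ⇑(Equiv.swap j k) (rename ⇑(Equiv.swap i j) (rename ⇑(Equiv.swap j k) f)) := by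
    rw [rename_mul, rename_mul, rename_mul, rename_mul, swap_braid hij hjk hik]
  have hc : ((X i - X j) * ((X i - X k) * (X j - X k)) : MvPolynomial (Fin n) ℤ) ≠ 0 :=
    mul_ne_zero (X_sub_X_ne hij) (mul_ne_zero (X_sub_X_ne hik) (X_sub_X_ne hjk))
  refine mul_left_cancel₀ hc ?_
  linear_combination k1 - k2 - hterm



lemma ne_of_adj {n : ℕ} {i j : Fin n} (hij : (i : ℕ) + 1 = (j : ℕ)) : i ≠ j :=
  fun h => by rw [h] at hij; omega

lemma schubert_exists_aux {n : ℕ} :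
    ∀ (k : ℕ) (w : Equiv.Perm (Fin n)), n * n - permLength n w ≤ k →
      ∃ S, IsSchubert n w S := by
  intro k
  induction k with
  | zero =>
      intro w hw
      by_cases hasc : ∃ i j : Fin n, (i : ℕ) + 1 = (j : ℕ) ∧ w i < w j
      · exfalso
        obtain ⟨i, j, hij, hlt⟩ := hasc
        have h1 := permLength_mul_swap hij hlt
        have h2 := permLength_le n (w * Equiv.swap i j)
        omega
      · push_neg at hasc
        have hrev := eq_revPerm_of_no_ascent w fun i j h => not_lt.2 (hasc i j h)
        exact ⟨_, hrev ▸ IsSchubert.w0⟩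
  | succ k ih =>
      intro w hw
      by_cases hasc : ∃ i j : Fin n, (i : ℕ) + 1 = (j : ℕ) ∧ w i < w j
      · obtain ⟨i, j, hij, hlt⟩ := hasc
        have h1 := permLength_mul_swap hij hlt
        obtain ⟨S', hS'⟩ := ih (w * Equiv.swap i j) (by omega)
        exact ⟨_, IsSchubert.step w i j hij hlt S' hS'⟩
      · push_neg at hasc
        have hrev := eq_revPerm_of_no_ascent w fun i j h => not_lt.2 (hasc i j h)
        exact ⟨_, hrev ▸ IsSchubert.w0⟩

lemma schubert_exists {n : ℕ} (w : Equiv.Perm (Fin n)) : ∃ S, IsSchubert n w S :=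
  schubert_exists_aux (n * n) w (Nat.sub_le _ _)


lemma fin_ne_of_val_ne {n : ℕ} {a b : Fin n} (h : (a : ℕ) ≠ (b : ℕ)) : a ≠ b :=
  fun he => h (congrArg Fin.val he)

lemma schubert_unique_aux {n : ℕ} :
    ∀ (k : ℕ) (w : Equiv.Perm (Fin n)) (S S' : MvPolynomial (Fin n) ℤ),
      n * n - permLength n w ≤ k → IsSchubert n w S → IsSchubert n w S' → S = S' := by
  intro k
  induction k with
  | zero =>
      intro w S S' hw hS hS'
      cases hS with
      | w0 =>
          cases hS' with
          | w0 => rfl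
          | step w i j hij hasc f hf =>
              exfalso
              rw [Fin.revPerm_apply, Fin.revPerm_apply] at hasc
              have h2 := Fin.rev_lt_rev.1 hasc
              rw [Fin.lt_def] at h2
              omega
      | step w i j hij hasc f hf =>
          exfalso
          have h1 := permLength_mul_swap hij hasc
          have h2 := permLength_le n (w * Equiv.swap i j)
          omega
  | succ k ih =>
      intro w S S' hw hS hS'
      have braid : ∀ (w : Equiv.Perm (Fin n)) (i j l : Fin n),
          (i : ℕ) + 1 = (j : ℕ) → (j : ℕ) + 1 = (l : ℕ) →
          w i < w j → w j < w l → n * n - permLength n w ≤ k + 1 →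
          ∀ f f', IsSchubert n (w * Equiv.swap i j) f →
            IsSchubert n (w * Equiv.swap j l) f' →
            ddiff n i j f = ddiff n j l f' := by
        intro w i j l hij hjl hasc1 hasc2 hw f f' hf hf'
        have hij' : i ≠ j := ne_of_adj hij
        have hjl' : j ≠ l := ne_of_adj hjl
        have hil' : i ≠ l := fin_ne_of_val_ne (by omega)
        have m1 := permLength_mul_swap hij hasc1
        have m2 := permLength_mul_swap hjl hasc2
        have hb1 := permLength_le n (w * Equiv.swap i j)
        have hb2 := permLength_le n (w * Equiv.swap j l)
        obtain ⟨g, hg⟩ :=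
          schubert_exists (w * Equiv.swap i j * Equiv.swap j l * Equiv.swap i j)
        -- point values
        have sjl_i : Equiv.swap j l i = i := Equiv.swap_apply_of_ne_of_ne hij' hil'
        have sij_l : Equiv.swap i j l = l := Equiv.swap_apply_of_ne_of_ne hil'.symm hjl'.symm
        -- chain 1
        have asc11 : (w * Equiv.swap i j * Equiv.swap j l) i
            < (w * Equiv.swap i j * Equiv.swap j l) j := by
          simp only [Equiv.Perm.mul_apply, sjl_i, Equiv.swap_apply_left, sij_l]
          exact hasc2
        have A1 : IsSchubert n (w * Equiv.swap i j * Equiv.swap j l)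
            (ddiff n i j g) := IsSchubert.step _ i j hij asc11 g hg
        have asc12 : (w * Equiv.swap i j) j < (w * Equiv.swap i j) l := by
          simp only [Equiv.Perm.mul_apply, Equiv.swap_apply_right, sij_l]
          exact hasc1.trans hasc2
        have A2 : IsSchubert n (w * Equiv.swap i j)
            (ddiff n j l (ddiff n i j g)) := IsSchubert.step _ j l hjl asc12 _ A1
        have hfeq : f = ddiff n j l (ddiff n i j g) :=
          ih (w * Equiv.swap i j) f _ (by omega) hf A2
        -- chain 2
        have hbr := swap_braid hij' hjl' hil'
        have hperm : w * Equiv.swap i j * Equiv.swap j l * Equiv.swap i j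
            = w * Equiv.swap j l * Equiv.swap i j * Equiv.swap j l := by
          simp only [mul_assoc] at hbr ⊢
          rw [hbr]
        have hg2 : IsSchubert n (w * Equiv.swap j l * Equiv.swap i j * Equiv.swap j l) g :=
          hperm ▸ hg
        have asc21 : (w * Equiv.swap j l * Equiv.swap i j) j
            < (w * Equiv.swap j l * Equiv.swap i j) l := by
          simp only [Equiv.Perm.mul_apply, Equiv.swap_apply_right, sjl_i, sij_l,
            Equiv.swap_apply_left]
          exact hasc1
        have B1 : IsSchubert n (w * Equiv.swap j l * Equiv.swap i j)
            (ddiff n j l g) := IsSchubert.step _ j l hjl asc21 g hg2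
        have asc22 : (w * Equiv.swap j l) i < (w * Equiv.swap j l) j := by
          simp only [Equiv.Perm.mul_apply, sjl_i, Equiv.swap_apply_left]
          exact hasc1.trans hasc2
        have B2 : IsSchubert n (w * Equiv.swap j l)
            (ddiff n i j (ddiff n j l g)) := IsSchubert.step _ i j hij asc22 _ B1
        have hf'eq : f' = ddiff n i j (ddiff n j l g) :=
          ih (w * Equiv.swap j l) f' _ (by omega) hf' B2
        rw [hfeq, hf'eq]
        exact ddiff_braid hij' hjl' hil' g
      cases hS with
      | w0 =>
          cases hS' with
          | w0 => rfl
          | step w i j hij hasc f hf =>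
              exfalso
              rw [Fin.revPerm_apply, Fin.revPerm_apply] at hasc
              have h2 := Fin.rev_lt_rev.1 hasc
              rw [Fin.lt_def] at h2
              omega
      | step w i j hij hasc f hf =>
          cases hS' with
          | w0 =>
              exfalso
              rw [Fin.revPerm_apply, Fin.revPerm_apply] at hasc
              have h2 := Fin.rev_lt_rev.1 hasc
              rw [Fin.lt_def] at h2
              omega
          | step _ i' j' hij' hasc' f' hf' =>
              have m1 := permLength_mul_swap hij hasc
              have m2 := permLength_mul_swap hij' hasc'
              have hb1 := permLength_le n (w * Equiv.swap i j)
              have hb2 := permLength_le n (w * Equiv.swap i' j')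
              rcases Nat.lt_trichotomy (i : ℕ) (i' : ℕ) with hlt | heq | hgt
              · rcases eq_or_lt_of_le (show (i : ℕ) + 1 ≤ (i' : ℕ) from hlt) with hadj | hfar
                · -- j = i'
                  have hji' : j = i' := Fin.ext (by omega)
                  rw [← hji']
                  exact braid w i j j' hij (by rw [hji']; exact hij') hasc
                    (by rw [hji']; exact hasc') hw f f' hf (by rw [hji']; exact hf')
                · -- disjoint
                  have d_ii' : i ≠ i' := fin_ne_of_val_ne (by omega)
                  have d_ij' : i ≠ j' := fin_ne_of_val_ne (by omega)
                  have d_ji' : j ≠ i' := fin_ne_of_val_ne (by omega)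
                  have d_jj' : j ≠ j' := fin_ne_of_val_ne (by omega)
                  have hijne : i ≠ j := ne_of_adj hij
                  have hij'ne : i' ≠ j' := ne_of_adj hij'
                  obtain ⟨g, hg⟩ :=
                    schubert_exists (w * Equiv.swap i j * Equiv.swap i' j')
                  have sij_i' : Equiv.swap i j i' = i' :=
                    Equiv.swap_apply_of_ne_of_ne d_ii'.symm d_ji'.symm
                  have sij_j' : Equiv.swap i j j' = j' :=
                    Equiv.swap_apply_of_ne_of_ne d_ij'.symm d_jj'.symm
                  have si'j'_i : Equiv.swap i' j' i = i :=
                    Equiv.swap_apply_of_ne_of_ne d_ii' d_ij'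
                  have si'j'_j : Equiv.swap i' j' j = j :=
                    Equiv.swap_apply_of_ne_of_ne d_ji' d_jj'
                  have asc1 : (w * Equiv.swap i j) i' < (w * Equiv.swap i j) j' := by
                    simp only [Equiv.Perm.mul_apply, sij_i', sij_j']
                    exact hasc'
                  have A1 : IsSchubert n (w * Equiv.swap i j) (ddiff n i' j' g) :=
                    IsSchubert.step _ i' j' hij' asc1 g hg
                  have hfeq : f = ddiff n i' j' g :=
                    ih (w * Equiv.swap i j) f _ (by omega) hf A1
                  have hperm : w * Equiv.swap i j * Equiv.swap i' j'
                      = w * Equiv.swap i' j' * Equiv.swap i j := by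
                    rw [mul_assoc, swap_disjoint_comm d_ii' d_ij' d_ji' d_jj', ← mul_assoc]
                  have hg2 : IsSchubert n (w * Equiv.swap i' j' * Equiv.swap i j) g :=
                    hperm ▸ hg
                  have asc2 : (w * Equiv.swap i' j') i < (w * Equiv.swap i' j') j := by
                    simp only [Equiv.Perm.mul_apply, si'j'_i, si'j'_j]
                    exact hasc
                  have B1 : IsSchubert n (w * Equiv.swap i' j') (ddiff n i j g) :=
                    IsSchubert.step _ i j hij asc2 g hg2
                  have hf'eq : f' = ddiff n i j g :=
                    ih (w * Equiv.swap i' j') f' _ (by omega) hf' B1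
                  rw [hfeq, hf'eq]
                  exact ddiff_comm hijne hij'ne d_ii' d_ij' d_ji' d_jj' g
              · -- i = i', j = j'
                have hii : i = i' := Fin.ext heq
                have hjj : j = j' := Fin.ext (by omega)
                have hfeq : f = f' := by
                  refine ih (w * Equiv.swap i j) f f' (by omega) hf ?_
                  rw [hii, hjj]
                  exact hf'
                rw [hfeq, hii, hjj]
              · rcases eq_or_lt_of_le (show (i' : ℕ) + 1 ≤ (i : ℕ) from hgt) with hadj | hfar
                · -- j' = i
                  have hji : j' = i := Fin.ext (by omega)
                  rw [← hji]
                  exact (braid w i' j' j hij' (by rw [hji]; exact hij)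
                    hasc' (by rw [hji]; exact hasc) hw f' f hf' (by rw [hji]; exact hf)).symm
                · -- disjoint (mirror)
                  have d_ii' : i' ≠ i := fin_ne_of_val_ne (by omega)
                  have d_ij' : i' ≠ j := fin_ne_of_val_ne (by omega)
                  have d_ji' : j' ≠ i := fin_ne_of_val_ne (by omega)
                  have d_jj' : j' ≠ j := fin_ne_of_val_ne (by omega)
                  have hijne : i ≠ j := ne_of_adj hij
                  have hij'ne : i' ≠ j' := ne_of_adj hij'
                  obtain ⟨g, hg⟩ :=
                    schubert_exists (w * Equiv.swap i' j' * Equiv.swap i j)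
                  have sij_i' : Equiv.swap i' j' i = i :=
                    Equiv.swap_apply_of_ne_of_ne d_ii'.symm d_ji'.symm
                  have sij_j' : Equiv.swap i' j' j = j :=
                    Equiv.swap_apply_of_ne_of_ne d_ij'.symm d_jj'.symm
                  have si'j'_i : Equiv.swap i j i' = i' :=
                    Equiv.swap_apply_of_ne_of_ne d_ii' d_ij'
                  have si'j'_j : Equiv.swap i j j' = j' :=
                    Equiv.swap_apply_of_ne_of_ne d_ji' d_jj'
                  have asc1 : (w * Equiv.swap i' j') i < (w * Equiv.swap i' j') j := by
                    simp only [Equiv.Perm.mul_apply, sij_i', sij_j']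
                    exact hasc
                  have A1 : IsSchubert n (w * Equiv.swap i' j') (ddiff n i j g) :=
                    IsSchubert.step _ i j hij asc1 g hg
                  have hf'eq : f' = ddiff n i j g :=
                    ih (w * Equiv.swap i' j') f' _ (by omega) hf' A1
                  have hperm : w * Equiv.swap i' j' * Equiv.swap i j
                      = w * Equiv.swap i j * Equiv.swap i' j' := by
                    rw [mul_assoc, swap_disjoint_comm d_ii' d_ij' d_ji' d_jj', ← mul_assoc]
                  have hg2 : IsSchubert n (w * Equiv.swap i j * Equiv.swap i' j') g :=
                    hperm ▸ hg
                  have asc2 : (w * Equiv.swap i j) i' < (w * Equiv.swap i j) j' := by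
                    simp only [Equiv.Perm.mul_apply, si'j'_i, si'j'_j]
                    exact hasc'
                  have B1 : IsSchubert n (w * Equiv.swap i j) (ddiff n i' j' g) :=
                    IsSchubert.step _ i' j' hij' asc2 g hg2
                  have hfeq : f = ddiff n i' j' g :=
                    ih (w * Equiv.swap i j) f _ (by omega) hf B1
                  rw [hfeq, hf'eq]
                  exact ddiff_comm hijne hij'ne d_ii'.symm d_ji'.symm d_ij'.symm d_jj'.symm g

lemma schubert_unique {n : ℕ} {w : Equiv.Perm (Fin n)} {S S' : MvPolynomial (Fin n) ℤ}
    (hS : IsSchubert n w S) (hS' : IsSchubert n w S') : S = S' :=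
  schubert_unique_aux (n * n) w S S' (Nat.sub_le _ _) hS hS'


lemma groth_lower {n : ℕ} {w : Equiv.Perm (Fin n)} {G : MvPolynomial (Fin n) ℤ}
    (hG : IsGroth n w G) :
    ∀ d : ℕ, d < permLength n w → MvPolynomial.homogeneousComponent d G = 0 := by
  induction hG with
  | w0 =>
      intro d hd
      have hH : (∏ i : Fin n, (X i : MvPolynomial (Fin n) ℤ) ^ (n - 1 - (i : ℕ))).IsHomogeneous
          (∑ i : Fin n, (n - 1 - (i : ℕ))) :=
        IsHomogeneous.prod _ _ _ fun i _ => isHomogeneous_X_pow i _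
      rw [homogeneousComponent_of_mem ((mem_homogeneousSubmodule _ _).2 hH)]
      have hle := permLength_revPerm_le n
      rw [if_neg (by omega)]
  | step w i j hij hasc f hf ih =>
      intro d hd
      have hne : i ≠ j := ne_of_adj hij
      have m1 := permLength_mul_swap hij hasc
      have hXj : (X j : MvPolynomial (Fin n) ℤ).IsHomogeneous 1 := isHomogeneous_X _ _
      have hq : ∀ e, e ≤ permLength n w →
          homogeneousComponent e ((1 - X j) * f) = 0 := by
        intro e he
        have h1 : ((1 - X j) * f : MvPolynomial (Fin n) ℤ) = f - X j * f := by ring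
        rw [h1, map_sub]
        have hf0 : homogeneousComponent e f = 0 := ih e (by omega)
        have hXf : homogeneousComponent e (X j * f) = 0 := by
          cases e with
          | zero => exact hcomp_mul_zero hXj f
          | succ e' =>
              rw [hcomp_mul_one hXj f e', ih e' (by omega), mul_zero]
        rw [hf0, hXf, sub_zero]
      have hp : ∀ e, e ≤ permLength n w →
          homogeneousComponent e ((1 - X j) * f
            - rename ⇑(Equiv.swap i j) ((1 - X j) * f)) = 0 := by
        intro e he
        rw [map_sub, hcomp_rename, hq e he, map_zero, sub_zero]
      have hd1 : 1 ≤ permLength n w := by omega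
      refine hcomp_cancel hne (ddiff_spec n i j ((1 - X j) * f))
        (m := permLength n w - 1) (fun e he => hp e (by omega)) d (by omega)

lemma groth_schubert_aux {n : ℕ} {w : Equiv.Perm (Fin n)} {G : MvPolynomial (Fin n) ℤ}
    (hG : IsGroth n w G) :
    ∀ S : MvPolynomial (Fin n) ℤ, IsSchubert n w S →
      ∀ d : ℕ, d ≤ permLength n w → MvPolynomial.homogeneousComponent d (G - S) = 0 := by
  induction hG with
  | w0 =>
      intro S hS d hd
      cases hS with
      | w0 => simp
      | step w i j hij hasc f hf =>
          exfalso
          rw [Fin.revPerm_apply, Fin.revPerm_apply] at hasc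
          have h2 := Fin.rev_lt_rev.1 hasc
          rw [Fin.lt_def] at h2
          omega
  | step w i j hij hasc f hf ih =>
      intro S hS d hd
      have hne : i ≠ j := ne_of_adj hij
      have m1 := permLength_mul_swap hij hasc
      obtain ⟨fS, hfS⟩ := schubert_exists (w * Equiv.swap i j)
      have hSd : IsSchubert n w (ddiff n i j fS) :=
        IsSchubert.step w i j hij hasc fS hfS
      have hSeq : S = ddiff n i j fS := schubert_unique hS hSd
      have hlow := groth_lower hf
      have hXj : (X j : MvPolynomial (Fin n) ℤ).IsHomogeneous 1 := isHomogeneous_X _ _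
      set q : MvPolynomial (Fin n) ℤ := (1 - X j) * f - fS with hqdef
      have hq : ∀ e, e ≤ permLength n w + 1 → homogeneousComponent e q = 0 := by
        intro e he
        have h1 : q = (f - fS) - X j * f := by rw [hqdef]; ring
        rw [h1, map_sub]
        have h2 : homogeneousComponent e (f - fS) = 0 :=
          ih fS hfS e (by omega)
        have hXf : homogeneousComponent e (X j * f) = 0 := by
          cases e with
          | zero => exact hcomp_mul_zero hXj f
          | succ e' =>
              rw [hcomp_mul_one hXj f e', hlow e' (by omega), mul_zero]
        rw [h2, hXf, sub_zero]
      have hkey : (X i - X j : MvPolynomial (Fin n) ℤ)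
          * (isobaric n i j f - ddiff n i j fS) = q - rename ⇑(Equiv.swap i j) q := by
        have e1 := ddiff_spec n i j ((1 - X j) * f)
        have e2 := ddiff_spec n i j fS
        rw [hqdef, map_sub]
        rw [isobaric]
        linear_combination e1 - e2
      have hp : ∀ e, e ≤ permLength n w + 1 →
          homogeneousComponent e (q - rename ⇑(Equiv.swap i j) q) = 0 := by
        intro e he
        rw [map_sub, hcomp_rename, hq e he, map_zero, sub_zero]
      rw [hSeq]
      exact hcomp_cancel hne hkey (m := permLength n w) hp d hd

/-- 𝔊_w = 𝔖_w + (terms of degree strictly greater than ℓ(w)); i.e.,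
the homogeneous components of 𝔊_w − 𝔖_w vanish in all degrees ≤ ℓ(w), so the
lowest-degree homogeneous component of 𝔊_w is 𝔖_w. -/
theorem groth_lowest_component_schubert (n : ℕ) (w : Equiv.Perm (Fin n))
    (S G : MvPolynomial (Fin n) ℤ)
    (hS : IsSchubert n w S) (hG : IsGroth n w G) :
    ∀ d : ℕ, d ≤ permLength n w →
      MvPolynomial.homogeneousComponent d (G - S) = 0 :=
  groth_schubert_aux hG S hS
end
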